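/- arXiv:2207.12524 — 11 statements merged into one kernel-verified Lean document; each statement's English description precedes it below -/
import Mathlib

section
/- Let E be a Riesz space, let S : E → E be a Riesz homomorphism and let T : E → E be a strictly positive linear map satisfying T ∘ S = T. Then S is injective. -/
/-- In a Riesz space `E`, if `S : E → E` is a Riesz homomorphism and `T : E → E` is a
strictly positive linear map with `T ∘ S = T`, then `S` is injective. -/
theorem riesz_hom_injective_of_strictly_positive
    {E : Type*} [AddCommGroup E] [Lattice E]
    [CovariantClass E E (· + ·) (· ≤ ·)] [Module ℝ E] [PosSMulMono ℝ E]
    (S T : E →ₗ[ℝ] E)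
    (hS : ∀ f g : E, S (f ⊔ g) = S f ⊔ S g)
    (hTpos : ∀ f : E, 0 ≤ f → 0 ≤ T f)
    (hTsp : ∀ f : E, 0 ≤ f → T f = 0 → f = 0)
    (hTS : ∀ f : E, T (S f) = T f) :
    Function.Injective S := by
  intro a b hab
  have h0 : S (a - b) = 0 := by rw [map_sub, hab, sub_self]
  set f := a - b with hf
  have habs : S |f| = |S f| := by
    rw [abs, abs, hS, map_neg]
  have hT0 : T |f| = 0 := by
    rw [← hTS, habs, h0, abs_zero, map_zero]
  have : |f| = 0 := hTsp _ (abs_nonneg f) hT0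
  have h1 : f ≤ 0 := by rw [← this, abs]; exact le_sup_left
  have h2 : -f ≤ 0 := by rw [← this, abs]; exact le_sup_right
  have h3 : 0 ≤ f := neg_nonpos.mp h2
  have : f = 0 := le_antisymm h1 h3
  exact sub_eq_zero.mp this
end

section
/- Let E be a Riesz space, let e ∈ E with e ≥ 0, and let S : E → E be a bijective Riesz homomorphism with S e = e. Let p be a component of e and let a be a component of p. Then there exist unique b, c ∈ E such that b ⊓ c = 0, a = b + c, b and c are components of a, p ⊓ S b = S b (i.e. S b ≤ p), and p ⊓ S c = 0. -/
/-- `p` is a component of `e`: `0 ≤ p ≤ e` and `p ⊓ (e - p) = 0`. -/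
def IsComponent {E : Type*} [AddCommGroup E] [Lattice E] (e p : E) : Prop :=
  0 ≤ p ∧ p ≤ e ∧ p ⊓ (e - p) = 0

/-- If `S` is a bijective Riesz homomorphism with `S e = e`, `p` is a component of `e` and
`a` is a component of `p`, then `a` decomposes uniquely as `a = b + c` with `b ⊓ c = 0`,
`b, c` components of `a`, `p ⊓ S b = S b` and `p ⊓ S c = 0`. -/
theorem component_decomposition
    {E : Type*} [AddCommGroup E] [Lattice E]
    [CovariantClass E E (· + ·) (· ≤ ·)] [Module ℝ E] [PosSMulMono ℝ E]
    (e : E) (he : 0 ≤ e)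
    (S : E →ₗ[ℝ] E) (hS : ∀ f g : E, S (f ⊔ g) = S f ⊔ S g)
    (hSbij : Function.Bijective S) (hSe : S e = e)
    (p : E) (hp : IsComponent e p)
    (a : E) (ha : IsComponent p a) :
    ∃! bc : E × E, bc.1 ⊓ bc.2 = 0 ∧ a = bc.1 + bc.2 ∧
      IsComponent a bc.1 ∧ IsComponent a bc.2 ∧
      p ⊓ S bc.1 = S bc.1 ∧ p ⊓ S bc.2 = 0 := by
  obtain ⟨hp0, hpe, hpc⟩ := hp
  obtain ⟨ha0, hap, hac⟩ := ha
  have hmono : ∀ f g : E, f ≤ g → S f ≤ S g := by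
    intro f g h
    have h1 : S f ⊔ S g = S g := by rw [← hS, sup_eq_right.mpr h]
    calc S f ≤ S f ⊔ S g := le_sup_left
    _ = S g := h1
  have hrefl : ∀ f g : E, S f ≤ S g → f ≤ g := by
    intro f g h
    have h1 : S (f ⊔ g) = S g := by rw [hS, sup_eq_right.mpr h]
    exact sup_eq_right.mp (hSbij.1 h1)
  have hinf : ∀ f g : E, S (f ⊓ g) = S f ⊓ S g := by
    intro f g
    have h1 : f ⊓ g = f + g - f ⊔ g := by
      rw [eq_sub_iff_add_eq, inf_add_sup]
    have h2 : S f ⊓ S g = S f + S g - (S f ⊔ S g) := by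
      rw [eq_sub_iff_add_eq, inf_add_sup]
    rw [h1, map_sub, map_add, hS, h2]
  obtain ⟨b, hb⟩ := hSbij.2 (S a ⊓ p)
  have hSa0 : 0 ≤ S a := by simpa using hmono 0 a ha0
  have hq0 : 0 ≤ S a ⊓ p := le_inf hSa0 hp0
  have hqSa : S a ⊓ p ≤ S a := inf_le_left
  have hSae : S a ≤ e := by
    have := hmono a e (le_trans hap hpe); rwa [hSe] at this
  have hkey : S a - (S a ⊓ p) ≤ e - p := by
    rw [sub_le_sub_iff]
    calc S a + p = (S a ⊓ p) + (S a ⊔ p) := (inf_add_sup _ _).symm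
    _ ≤ (S a ⊓ p) + e := add_le_add le_rfl (sup_le hSae hpe)
    _ = e + (S a ⊓ p) := add_comm _ _
  have hr0 : 0 ≤ S a - (S a ⊓ p) := sub_nonneg.mpr hqSa
  have hdisj : (S a ⊓ p) ⊓ (S a - (S a ⊓ p)) = 0 :=
    le_antisymm (hpc ▸ inf_le_inf inf_le_right hkey) (le_inf hq0 hr0)
  have hpSc : p ⊓ (S a - (S a ⊓ p)) = 0 :=
    le_antisymm (hpc ▸ inf_le_inf le_rfl hkey) (le_inf hp0 hr0)
  have hb0 : 0 ≤ b := hrefl 0 b (by rw [map_zero, hb]; exact hq0)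
  have hba : b ≤ a := hrefl b a (hb ▸ hqSa)
  have hSab : S (a - b) = S a - (S a ⊓ p) := by rw [map_sub, hb]
  have hbc : b ⊓ (a - b) = 0 := by
    apply hSbij.1
    rw [hinf, hb, hSab, map_zero, hdisj]
  refine ⟨(b, a - b), ⟨hbc, by rw [add_comm, sub_add_cancel], ⟨hb0, hba, hbc⟩,
    ⟨?_, sub_le_self _ hb0, by rw [sub_sub_cancel, inf_comm, hbc]⟩,
    ?_, by rw [hSab, hpSc]⟩, ?_⟩
  · rw [sub_nonneg]; exact hba
  · rw [hb, inf_eq_right.mpr inf_le_right]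
  · rintro ⟨b', c'⟩ ⟨h1, h2, h3, h4, h5, h6⟩
    have hSb'p : S b' ≤ p := inf_eq_right.mp h5
    have hSb'a : S b' ≤ S a := hmono b' a h3.2.1
    have hSc'0 : 0 ≤ S c' := by simpa using hmono 0 c' h4.1
    have hSb'0 : 0 ≤ S b' := by simpa using hmono 0 b' h3.1
    have hle : S a ⊓ p ≤ S b' := by
      have key : S a ⊓ p = S b' + (S c' ⊓ (p - S b')) := by
        rw [h2, map_add]
        calc (S b' + S c') ⊓ p = (S b' + S c') ⊓ (S b' + (p - S b')) := by
              rw [add_sub_cancel]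
        _ = S b' + (S c' ⊓ (p - S b')) := (add_inf _ _ _).symm
      have hz : S c' ⊓ (p - S b') = 0 := by
        refine le_antisymm ?_ (le_inf hSc'0 (sub_nonneg.mpr hSb'p))
        calc S c' ⊓ (p - S b') ≤ S c' ⊓ p := inf_le_inf le_rfl (sub_le_self _ hSb'0)
        _ = p ⊓ S c' := inf_comm _ _
        _ = 0 := h6
      rw [key, hz, add_zero]
    have hSb' : S b' = S a ⊓ p := le_antisymm (le_inf hSb'a hSb'p) hle
    have hb' : b' = b := hSbij.1 (by rw [hSb', hb])
    have hc' : c' = a - b := by rw [← hb', h2]; abel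
    exact Prod.ext hb' hc'
end

section
/- Let E be a Dedekind complete Riesz space, let e ∈ E with e ≥ 0, let S : E → E be a bijective Riesz homomorphism with S e = e, let q be a component of e and let p be a component of q. Then p is recurrent with respect to q — that is, there exist components p_n of p (n ≥ 1) with sup_{n≥1} p_n = p and Sⁿ p_n ≤ q for every n ≥ 1 — if and only if p ≤ sup_{n≥1} S^{-n} q, where this supremum exists in E since the family (S^{-n} q)_{n≥1} is bounded above by e. -/
/-- In a Dedekind complete Riesz space, for a bijective Riesz homomorphism `S` with `S e = e`
(with inverse `S'`), a component `p` of a component `q` of `e` is recurrent with respect to `q`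
(i.e. there are components `p_n` of `p`, `n ≥ 1`, with `sup p_n = p` and `Sⁿ p_n ≤ q`)
if and only if `p ≤ sup_{n ≥ 1} S^{-n} q`; the latter supremum exists in `E` since the family
`(S^{-n} q)` is bounded above by `e`. -/
theorem recurrent_iff_le_sup
    {E : Type*} [AddCommGroup E] [Lattice E]
    [CovariantClass E E (· + ·) (· ≤ ·)] [Module ℝ E] [PosSMulMono ℝ E]
    (hDC : ∀ s : Set E, s.Nonempty → BddAbove s → ∃ a : E, IsLUB s a)
    (e : E) (he : 0 ≤ e)
    (S S' : E →ₗ[ℝ] E) (hS : ∀ f g : E, S (f ⊔ g) = S f ⊔ S g)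
    (hS'S : ∀ x : E, S' (S x) = x) (hSS' : ∀ x : E, S (S' x) = x)
    (hSe : S e = e)
    (q : E) (hq : IsComponent e q)
    (p : E) (hp : IsComponent q p) :
    ∃ w : E, IsLUB (Set.range fun n : ℕ => (S' ^ (n + 1)) q) w ∧
      ((∃ pn : ℕ → E, (∀ n : ℕ, IsComponent p (pn n)) ∧
          IsLUB (Set.range pn) p ∧ ∀ n : ℕ, (S ^ (n + 1)) (pn n) ≤ q) ↔ p ≤ w) := by
  letI : DistribLattice E := AddCommGroup.toDistribLattice E
  obtain ⟨hq0, hqe, hqd⟩ := hq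
  obtain ⟨hp0, hpq, hpd⟩ := hp
  -- basic facts about S and S'
  have hSinj : Function.Injective S := fun a b h => by
    have h2 := congrArg S' h
    rwa [hS'S, hS'S] at h2
  have hS' : ∀ f g : E, S' (f ⊔ g) = S' f ⊔ S' g := by
    intro f g
    apply hSinj
    rw [hSS', hS (S' f) (S' g), hSS', hSS']
  have hSmono : ∀ {f g : E}, f ≤ g → S f ≤ S g := by
    intro f g h
    have h2 := hS f g
    rw [sup_eq_right.2 h] at h2
    rw [h2]; exact le_sup_left
  have hS'mono : ∀ {f g : E}, f ≤ g → S' f ≤ S' g := by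
    intro f g h
    have h2 := hS' f g
    rw [sup_eq_right.2 h] at h2
    rw [h2]; exact le_sup_left
  have hS'e : S' e = e := by
    have h2 := hS'S e
    rwa [hSe] at h2
  have hS'inf : ∀ f g : E, S' (f ⊓ g) = S' f ⊓ S' g := by
    intro f g
    have h1 : f ⊓ g = f + g - (f ⊔ g) := by
      rw [← inf_add_sup f g]; abel
    rw [h1, map_sub, map_add, hS' f g, ← inf_add_sup (S' f) (S' g)]; abel
  -- facts about powers of S'
  have hpow_mono : ∀ n : ℕ, ∀ {x y : E}, x ≤ y → (S' ^ n) x ≤ (S' ^ n) y := by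
    intro n
    induction n with
    | zero => intro x y h; simpa using h
    | succ k ih =>
      intro x y h
      rw [pow_succ', Module.End.mul_apply, Module.End.mul_apply]
      exact hS'mono (ih h)
  have hSpow_mono : ∀ n : ℕ, ∀ {x y : E}, x ≤ y → (S ^ n) x ≤ (S ^ n) y := by
    intro n
    induction n with
    | zero => intro x y h; simpa using h
    | succ k ih =>
      intro x y h
      rw [pow_succ', Module.End.mul_apply, Module.End.mul_apply]
      exact hSmono (ih h)
  have hpow_e : ∀ n : ℕ, (S' ^ n) e = e := by
    intro n
    induction n with
    | zero => simp
    | succ k ih => rw [pow_succ', Module.End.mul_apply, ih, hS'e]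
  have hpow_inf : ∀ n : ℕ, ∀ x y : E, (S' ^ n) (x ⊓ y) = (S' ^ n) x ⊓ (S' ^ n) y := by
    intro n
    induction n with
    | zero => simp
    | succ k ih =>
      intro x y
      rw [pow_succ', Module.End.mul_apply, Module.End.mul_apply, Module.End.mul_apply, ih, hS'inf]
  have hcancel : ∀ n : ℕ, ∀ x : E, (S ^ n) ((S' ^ n) x) = x := by
    intro n
    induction n with
    | zero => simp
    | succ k ih =>
      intro x
      rw [pow_succ S k, pow_succ' S' k, Module.End.mul_apply, Module.End.mul_apply, hSS', ih]
  have hcancel' : ∀ n : ℕ, ∀ x : E, (S' ^ n) ((S ^ n) x) = x := by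
    intro n
    induction n with
    | zero => simp
    | succ k ih =>
      intro x
      rw [pow_succ S' k, pow_succ' S k, Module.End.mul_apply, Module.End.mul_apply, hS'S, ih]
  -- the family c n = S'^(n+1) q
  set c : ℕ → E := fun n => (S' ^ (n + 1)) q with hc
  have hc0 : ∀ n, 0 ≤ c n := by
    intro n
    have := hpow_mono (n + 1) hq0
    simpa using this
  have hce : ∀ n, c n ≤ e := by
    intro n
    have := hpow_mono (n + 1) hqe
    simpa [hpow_e] using this
  have hcd : ∀ n, c n ⊓ (e - c n) = 0 := by
    intro n
    have h1 : c n ⊓ (e - c n) = (S' ^ (n + 1)) (q ⊓ (e - q)) := by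
      rw [hpow_inf, map_sub, hpow_e]
    rw [h1, hqd, map_zero]
  -- existence of w
  obtain ⟨w, hw⟩ := hDC (Set.range c) ⟨c 0, ⟨0, rfl⟩⟩ ⟨e, by rintro x ⟨n, rfl⟩; exact hce n⟩
  have hpe : p ≤ e := le_trans hpq hqe
  refine ⟨w, hw, ?_, ?_⟩
  · -- forward direction
    rintro ⟨pn, hcomp, hlub, hle⟩
    refine hlub.2 ?_
    rintro x ⟨n, rfl⟩
    have h1 : pn n = (S' ^ (n + 1)) ((S ^ (n + 1)) (pn n)) := (hcancel' (n + 1) (pn n)).symm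
    have h2 : pn n ≤ c n := by
      rw [h1]; exact hpow_mono (n + 1) (hle n)
    exact le_trans h2 (hw.1 ⟨n, rfl⟩)
  · -- backward direction
    intro hpw
    refine ⟨fun n => p ⊓ c n, ?_, ?_, ?_⟩
    · intro n
      have ha0 : (0 : E) ≤ p ⊓ c n := le_inf hp0 (hc0 n)
      have hb0 : (0 : E) ≤ p ⊓ (e - c n) := le_inf hp0 (sub_nonneg.2 (hce n))
      have hab : (p ⊓ c n) ⊓ (p ⊓ (e - c n)) = 0 := by
        apply le_antisymm
        · calc (p ⊓ c n) ⊓ (p ⊓ (e - c n)) ≤ c n ⊓ (e - c n) :=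
                inf_le_inf inf_le_right inf_le_right
            _ = 0 := hcd n
        · exact le_inf ha0 hb0
      have hsum : p ⊓ c n + p ⊓ (e - c n) = p := by
        have h1 : p ⊓ c n + p ⊓ (e - c n) = (p ⊓ c n) ⊔ (p ⊓ (e - c n)) := by
          rw [← inf_add_sup (p ⊓ c n) (p ⊓ (e - c n)), hab, zero_add]
        have h2 : c n ⊔ (e - c n) = e := by
          have := inf_add_sup (c n) (e - c n)
          rw [hcd n, zero_add] at this
          rw [this]; abel
        rw [h1, ← inf_sup_left, h2, inf_eq_left.2 hpe]
      refine ⟨le_inf hp0 (hc0 n), inf_le_left, ?_⟩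
      have h3 : p - p ⊓ c n = p ⊓ (e - c n) := by
        rw [eq_comm, eq_sub_iff_add_eq, add_comm]; exact hsum
      rw [h3, hab]
    · -- IsLUB (range fun n => p ⊓ c n) p
      have key : IsLUB (Set.range fun n => p ⊓ c n) (p ⊓ w) := by
        constructor
        · rintro x ⟨n, rfl⟩
          exact inf_le_inf_left p (hw.1 ⟨n, rfl⟩)
        · intro u hu
          have hkey : ∀ n, c n ≤ w - p ⊓ w + u := by
            intro n
            have h1 : p ⊓ w + c n ≤ p ⊓ c n + w := by
              rw [inf_add, inf_add]
              exact inf_le_inf (add_le_add_right (hw.1 ⟨n, rfl⟩) p)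
                (le_of_eq (add_comm w (c n)))
            have h2 : c n ≤ p ⊓ c n + w - p ⊓ w := by
              rw [le_sub_iff_add_le, add_comm]
              exact h1
            calc c n ≤ p ⊓ c n + w - p ⊓ w := h2
              _ ≤ u + w - p ⊓ w := sub_le_sub_right (add_le_add_left (hu ⟨n, rfl⟩) w) _
              _ = w - p ⊓ w + u := by abel
          have h3 : w ≤ w - p ⊓ w + u := hw.2 (by rintro x ⟨n, rfl⟩; exact hkey n)
          have h4 : w - (w - p ⊓ w) ≤ u := sub_le_iff_le_add.2 (by rwa [add_comm] at h3)
          calc p ⊓ w = w - (w - p ⊓ w) := by abel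
            _ ≤ u := h4
      rwa [inf_eq_left.2 hpw] at key
    · intro n
      have h1 : (S ^ (n + 1)) (p ⊓ c n) ≤ (S ^ (n + 1)) (c n) := hSpow_mono (n + 1) inf_le_right
      rwa [hcancel (n + 1) q] at h1
end

section
/- Let E be a Dedekind complete Archimedean Riesz space, let e ∈ E with e ≥ 0, let S : E → E be a bijective Riesz homomorphism with S e = e, and let T : E → E be a strictly positive linear map with T e = e and T ∘ S = T. Then for every component q of e one has q ≤ sup_{n≥1} S^{-n} q, where this supremum exists in E since the family (S^{-n} q)_{n≥1} is bounded above by e. -/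
/-- In a lattice-ordered group, the inf of a sum of nonnegative elements with a
nonnegative element is at most the sum of the infs. -/
lemma aux_inf_add_le {E : Type*} [AddCommGroup E] [Lattice E]
    [CovariantClass E E (· + ·) (· ≤ ·)] {a b c : E} (ha : 0 ≤ a) (hb : 0 ≤ b) (hc : 0 ≤ c) :
    (a + b) ⊓ c ≤ a ⊓ c + b ⊓ c := by
  have h1 : a ⊓ c + b ⊓ c = ((a ⊓ c) + b) ⊓ ((a ⊓ c) + c) := by rw [add_inf]
  rw [h1, inf_add, inf_add]
  refine le_inf (le_inf inf_le_left ?_) (le_inf ?_ ?_)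
  · exact le_trans inf_le_right (le_add_of_nonneg_right hb)
  · exact le_trans inf_le_right (le_add_of_nonneg_left ha)
  · exact le_trans inf_le_right (le_add_of_nonneg_left hc)

/-- A finite sum of nonnegative elements each disjoint from `g` is disjoint from `g`. -/
lemma aux_sum_nonneg {E : Type*} [AddCommGroup E] [Lattice E]
    [CovariantClass E E (· + ·) (· ≤ ·)] (f : ℕ → E) (N : ℕ) (hf : ∀ k, 0 ≤ f k) :
    0 ≤ ∑ k ∈ Finset.range N, f k := by
  induction N with
  | zero => simp
  | succ N ih =>
      rw [Finset.sum_range_succ]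
      exact add_nonneg ih (hf N)

/-- A finite sum of nonnegative elements each disjoint from `g` is disjoint from `g`. -/
lemma aux_sum_inf_eq_zero {E : Type*} [AddCommGroup E] [Lattice E]
    [CovariantClass E E (· + ·) (· ≤ ·)] (f : ℕ → E) (g : E) (N : ℕ)
    (hf : ∀ k, 0 ≤ f k) (hg : 0 ≤ g) (h : ∀ k, k < N → f k ⊓ g = 0) :
    (∑ k ∈ Finset.range N, f k) ⊓ g = 0 := by
  induction N with
  | zero => rw [Finset.range_zero, Finset.sum_empty]; exact inf_eq_left.2 hg
  | succ N ih =>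
      have hsum0 : 0 ≤ ∑ k ∈ Finset.range N, f k := aux_sum_nonneg f N hf
      have hsum0' : 0 ≤ ∑ k ∈ Finset.range (N + 1), f k := aux_sum_nonneg f (N + 1) hf
      refine le_antisymm ?_ (le_inf hsum0' hg)
      rw [Finset.sum_range_succ]
      calc ((∑ k ∈ Finset.range N, f k) + f N) ⊓ g
          ≤ (∑ k ∈ Finset.range N, f k) ⊓ g + f N ⊓ g :=
            aux_inf_add_le hsum0 (hf N) hg
        _ = 0 := by
            rw [ih fun k hk => h k (by omega), h N (by omega), add_zero]

/-- In a Dedekind complete Archimedean Riesz space, if `S` is a bijective Riesz homomorphism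
with `S e = e` (inverse `S'`), and `T` is a strictly positive linear map with `T e = e` and
`T ∘ S = T`, then every component `q` of `e` satisfies `q ≤ sup_{n ≥ 1} S^{-n} q`; this
supremum exists in `E` since the family `(S^{-n} q)` is bounded above by `e`. -/
theorem component_le_sup_inverse_iterates
    {E : Type*} [AddCommGroup E] [Lattice E]
    [CovariantClass E E (· + ·) (· ≤ ·)] [Module ℝ E] [PosSMulMono ℝ E]
    (hDC : ∀ s : Set E, s.Nonempty → BddAbove s → ∃ a : E, IsLUB s a)
    (hArch : ∀ x y : E, 0 ≤ x → 0 ≤ y → (∀ n : ℕ, n • x ≤ y) → x = 0)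
    (e : E) (he : 0 ≤ e)
    (S S' : E →ₗ[ℝ] E) (hS : ∀ f g : E, S (f ⊔ g) = S f ⊔ S g)
    (hS'S : ∀ x : E, S' (S x) = x) (hSS' : ∀ x : E, S (S' x) = x)
    (hSe : S e = e)
    (T : E →ₗ[ℝ] E)
    (hTpos : ∀ f : E, 0 ≤ f → 0 ≤ T f)
    (hTsp : ∀ f : E, 0 ≤ f → T f = 0 → f = 0)
    (hTe : T e = e) (hTS : ∀ f : E, T (S f) = T f)
    (q : E) (hq : IsComponent e q) :
    ∃ w : E, IsLUB (Set.range fun n : ℕ => (S' ^ (n + 1)) q) w ∧ q ≤ w := by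
  obtain ⟨hq0, hqe, hqc⟩ := hq
  -- S' is a sup-homomorphism
  have hS'sup : ∀ f g : E, S' (f ⊔ g) = S' f ⊔ S' g := by
    intro f g
    conv_lhs => rw [← hSS' f, ← hSS' g, ← hS, hS'S]
  -- S' is monotone
  have hS'mono : ∀ f g : E, f ≤ g → S' f ≤ S' g := by
    intro f g hfg
    have : S' f ⊔ S' g = S' g := by rw [← hS'sup, sup_eq_right.2 hfg]
    exact le_of_sup_eq this
  -- S' is an inf-homomorphism (using f ⊓ g = f + g - (f ⊔ g))
  have hS'inf : ∀ f g : E, S' (f ⊓ g) = S' f ⊓ S' g := by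
    intro f g
    have h1 : f ⊓ g = f + g - (f ⊔ g) := by
      rw [eq_sub_iff_add_eq, inf_add_sup]
    have h2 : S' f ⊓ S' g = S' f + S' g - (S' f ⊔ S' g) := by
      rw [eq_sub_iff_add_eq, inf_add_sup]
    rw [h1, h2, map_sub, map_add, hS'sup]
  have hS'e : S' e = e := by
    have h := hS'S e
    rw [hSe] at h
    exact h
  -- T is invariant under S'
  have hTS' : ∀ f : E, T (S' f) = T f := by
    intro f
    conv_rhs => rw [← hSS' f, hTS]
  -- powers of S'
  have hpow_succ : ∀ (n : ℕ) (x : E), (S' ^ (n + 1)) x = (S' ^ n) (S' x) := by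
    intro n x
    rw [pow_succ, Module.End.mul_apply]
  -- each iterate of a component is a component
  have hS'comp : ∀ p : E, IsComponent e p → IsComponent e (S' p) := by
    rintro p ⟨h0, hpe, hc⟩
    refine ⟨by simpa using hS'mono 0 p h0, by rw [← hS'e]; exact hS'mono _ _ hpe, ?_⟩
    have : S' (p ⊓ (e - p)) = S' p ⊓ (e - S' p) := by
      rw [hS'inf, map_sub, hS'e]
    rw [← this, hc, map_zero]
  have hSnq : ∀ n : ℕ, IsComponent e ((S' ^ n) q) := by
    intro n
    induction n with
    | zero => exact ⟨hq0, hqe, hqc⟩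
    | succ n ih =>
        rw [pow_succ', Module.End.mul_apply]
        exact hS'comp _ ih
  -- the supremum exists
  set s : Set E := Set.range fun n : ℕ => (S' ^ (n + 1)) q with hs
  have hne : s.Nonempty := ⟨(S' ^ 1) q, ⟨0, rfl⟩⟩
  have hbdd : BddAbove s := ⟨e, by rintro x ⟨n, rfl⟩; exact (hSnq (n + 1)).2.1⟩
  obtain ⟨w, hw⟩ := hDC s hne hbdd
  refine ⟨w, hw, ?_⟩
  have hwe : w ≤ e := hw.2 (by rintro x ⟨n, rfl⟩; exact (hSnq (n + 1)).2.1)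
  have hw0 : 0 ≤ w := le_trans (hSnq 1).1 (hw.1 ⟨0, rfl⟩)
  have hew0 : 0 ≤ e - w := sub_nonneg.2 hwe
  -- w is a component of e
  have hwc : w ⊓ (e - w) = 0 := by
    refine le_antisymm ?_ (le_inf hw0 hew0)
    -- each member of s is ≤ w ⊔ (e - w) - (e - w)
    have hub : ∀ x ∈ s, x ≤ w ⊔ (e - w) - (e - w) := by
      rintro x ⟨n, rfl⟩
      set p := (S' ^ (n + 1)) q with hp
      obtain ⟨hp0, hpe, hpc⟩ := hSnq (n + 1)
      have hpw : p ≤ w := hw.1 ⟨n, rfl⟩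
      have hdisj : p ⊓ (e - w) = 0 := by
        refine le_antisymm ?_ (le_inf hp0 hew0)
        calc p ⊓ (e - w) ≤ p ⊓ (e - p) := inf_le_inf_left p (sub_le_sub_left hpw e)
          _ = 0 := hpc
      have hpeq : p = p ⊔ (e - w) - (e - w) := by
        rw [eq_sub_iff_add_eq]
        calc p + (e - w) = p ⊓ (e - w) + (p ⊔ (e - w)) := (inf_add_sup p (e - w)).symm
          _ = p ⊔ (e - w) := by rw [hdisj, zero_add]
        -- goal now closed? no: we computed `p + (e - w) = p ⊔ (e - w)` directly
      refine le_trans hpeq.le ?_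
      exact sub_le_sub_right (sup_le_sup_right hpw _) _
    have hwle : w ≤ w ⊔ (e - w) - (e - w) := hw.2 hub
    calc w ⊓ (e - w) = w + (e - w) - (w ⊔ (e - w)) := by
          rw [eq_sub_iff_add_eq, add_comm]; exact (inf_add_sup w (e - w)) ▸ (by abel)
      _ ≤ (w ⊔ (e - w) - (e - w)) + (e - w) - (w ⊔ (e - w)) :=
          sub_le_sub_right (add_le_add hwle le_rfl) _
      _ = 0 := by abel
  -- the bad part
  set p := q ⊓ (e - w) with hpdef
  have hp0 : 0 ≤ p := le_inf hq0 hew0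
  have hpq : p ≤ q := inf_le_left
  have hpew : p ≤ e - w := inf_le_right
  -- iterates: monotonicity and inf-preservation of powers
  have hS'n_mono : ∀ (n : ℕ) (f g : E), f ≤ g → (S' ^ n) f ≤ (S' ^ n) g := by
    intro n
    induction n with
    | zero => intro f g h; simpa using h
    | succ n ih =>
        intro f g h
        rw [hpow_succ, hpow_succ]
        exact ih _ _ (hS'mono _ _ h)
  have hS'n_inf : ∀ (n : ℕ) (f g : E), (S' ^ n) (f ⊓ g) = (S' ^ n) f ⊓ (S' ^ n) g := by
    intro n
    induction n with
    | zero => intro f g; simp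
    | succ n ih =>
        intro f g
        rw [hpow_succ, hpow_succ, hpow_succ, hS'inf, ih]
  have hpn0 : ∀ n : ℕ, 0 ≤ (S' ^ n) p := by
    intro n
    simpa using hS'n_mono n 0 p hp0
  -- disjointness: p ⊓ (S'^(k+1)) p = 0
  have hdisj1 : ∀ k : ℕ, p ⊓ (S' ^ (k + 1)) p = 0 := by
    intro k
    refine le_antisymm ?_ (le_inf hp0 (hpn0 _))
    have h1 : (S' ^ (k + 1)) p ≤ w :=
      le_trans (hS'n_mono (k + 1) p q hpq) (hw.1 ⟨k, rfl⟩)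
    calc p ⊓ (S' ^ (k + 1)) p ≤ (e - w) ⊓ w := inf_le_inf hpew h1
      _ = w ⊓ (e - w) := inf_comm _ _
      _ = 0 := hwc
  -- pairwise disjointness
  have hdisj : ∀ m n : ℕ, m < n → (S' ^ m) p ⊓ (S' ^ n) p = 0 := by
    intro m n hmn
    obtain ⟨k, rfl⟩ := Nat.exists_eq_add_of_lt hmn
    have key : (S' ^ m) (p ⊓ (S' ^ (k + 1)) p) = (S' ^ m) p ⊓ (S' ^ (m + k + 1)) p := by
      rw [hS'n_inf, ← Module.End.mul_apply, ← pow_add,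
        show m + (k + 1) = m + k + 1 by omega]
    rw [← key, hdisj1, map_zero]
  -- partial sums are bounded by e
  have hF0 : ∀ k : ℕ, 0 ≤ (S' ^ (k + 1)) p := fun k => hpn0 (k + 1)
  have hsum_le : ∀ N : ℕ, (∑ k ∈ Finset.range N, (S' ^ (k + 1)) p) ≤ e := by
    intro N
    induction N with
    | zero => simpa using he
    | succ N ih =>
        have hdN : (∑ k ∈ Finset.range N, (S' ^ (k + 1)) p) ⊓ (S' ^ (N + 1)) p = 0 :=
          aux_sum_inf_eq_zero (fun k => (S' ^ (k + 1)) p) ((S' ^ (N + 1)) p) N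
            hF0 (hF0 N) (fun k hk => hdisj (k + 1) (N + 1) (by omega))
        rw [Finset.sum_range_succ]
        have hsup : (∑ k ∈ Finset.range N, (S' ^ (k + 1)) p) + (S' ^ (N + 1)) p =
            (∑ k ∈ Finset.range N, (S' ^ (k + 1)) p) ⊔ (S' ^ (N + 1)) p := by
          rw [← inf_add_sup, hdN, zero_add]
        rw [hsup]
        refine sup_le ih ?_
        calc (S' ^ (N + 1)) p ≤ (S' ^ (N + 1)) q := hS'n_mono (N + 1) p q hpq
          _ ≤ e := (hSnq (N + 1)).2.1
  -- T of each iterate equals T p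
  have hTn : ∀ n : ℕ, T ((S' ^ n) p) = T p := by
    intro n
    induction n with
    | zero => simp
    | succ n ih =>
        rw [pow_succ', Module.End.mul_apply, hTS', ih]
  -- T p = 0 by Archimedean property
  have hTp0 : T p = 0 := by
    refine hArch (T p) e (hTpos p hp0) he ?_
    intro n
    have hTsum : T (∑ k ∈ Finset.range n, (S' ^ (k + 1)) p) = n • T p := by
      rw [map_sum]
      rw [Finset.sum_congr rfl fun k _ => hTn (k + 1)]
      simp
    have hle : T (∑ k ∈ Finset.range n, (S' ^ (k + 1)) p) ≤ T e := by
      have h := hTpos _ (sub_nonneg.2 (hsum_le n))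
      rw [map_sub] at h
      exact sub_nonneg.1 h
    rw [hTsum, hTe] at hle
    exact hle
  have hp_eq : p = 0 := hTsp p hp0 hTp0
  -- conclude q ≤ w
  have hqw0 : 0 ≤ q ⊓ w := le_inf hq0 hw0
  have h1 : q - q ⊓ w = q ⊔ w - w := by
    rw [sub_eq_sub_iff_add_eq_add, add_comm (q ⊔ w) (q ⊓ w)]
    exact (inf_add_sup q w).symm
  have h2 : q - q ⊓ w ≤ q := sub_le_self q hqw0
  have h3 : q - q ⊓ w ≤ e - w := by
    rw [h1]
    exact sub_le_sub_right (sup_le hqe hwe) w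
  have h4 : q - q ⊓ w ≤ 0 := by
    calc q - q ⊓ w ≤ q ⊓ (e - w) := le_inf h2 h3
      _ = 0 := by rw [← hpdef]; exact hp_eq
  calc q ≤ q ⊓ w := sub_nonpos.1 h4
    _ ≤ w := inf_le_right
end

section
/- (Riesz space Poincaré recurrence theorem.) Let E be a Dedekind complete Archimedean Riesz space, let e ∈ E with e ≥ 0, let S : E → E be a surjective Riesz homomorphism with S e = e, and let T : E → E be a strictly positive linear map with T e = e and T ∘ S = T. Then every component p of a component q of e is recurrent with respect to q: there exist components p_n of p (n ≥ 1) such that sup_{n≥1} p_n = p and Sⁿ p_n ≤ q for every n ≥ 1. -/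
/-- **Riesz space Poincaré recurrence theorem.** In a Dedekind complete Archimedean Riesz
space, if `S` is a surjective Riesz homomorphism with `S e = e` and `T` is a strictly
positive linear map with `T e = e` and `T ∘ S = T`, then every component `p` of a component
`q` of `e` is recurrent with respect to `q`: there are components `p_n` of `p` (`n ≥ 1`)
with `sup_{n ≥ 1} p_n = p` and `Sⁿ p_n ≤ q` for every `n ≥ 1`. -/
theorem riesz_poincare_recurrence
    {E : Type*} [AddCommGroup E] [Lattice E]
    [CovariantClass E E (· + ·) (· ≤ ·)] [Module ℝ E] [PosSMulMono ℝ E]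
    (hDC : ∀ s : Set E, s.Nonempty → BddAbove s → ∃ a : E, IsLUB s a)
    (hArch : ∀ x y : E, 0 ≤ x → 0 ≤ y → (∀ n : ℕ, n • x ≤ y) → x = 0)
    (e : E) (he : 0 ≤ e)
    (S : E →ₗ[ℝ] E) (hS : ∀ f g : E, S (f ⊔ g) = S f ⊔ S g)
    (hSsurj : Function.Surjective S) (hSe : S e = e)
    (T : E →ₗ[ℝ] E)
    (hTpos : ∀ f : E, 0 ≤ f → 0 ≤ T f)
    (hTsp : ∀ f : E, 0 ≤ f → T f = 0 → f = 0)
    (hTe : T e = e) (hTS : ∀ f : E, T (S f) = T f)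
    (q : E) (hq : IsComponent e q)
    (p : E) (hp : IsComponent q p) :
    ∃ pn : ℕ → E, (∀ n : ℕ, IsComponent p (pn n)) ∧
      IsLUB (Set.range pn) p ∧ ∀ n : ℕ, (S ^ (n + 1)) (pn n) ≤ q := by
  obtain ⟨hq0, hqe, hqd⟩ := hq
  obtain ⟨hp0, hpq, hpd⟩ := hp
  have hpe : p ≤ e := hpq.trans hqe
  -- subadditivity of inf over sums of nonnegatives
  have hsubadd : ∀ a b c : E, 0 ≤ a → 0 ≤ b → 0 ≤ c → a ⊓ (b + c) ≤ a ⊓ b + a ⊓ c := by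
    intro a b c ha hb hc
    rw [← sub_le_iff_le_add', sub_inf]
    refine sup_le (le_trans (sub_nonpos.mpr inf_le_left) (le_inf ha hc)) (le_inf ?_ ?_)
    · exact sub_le_iff_le_add'.mpr (le_trans inf_le_left (le_add_of_nonneg_left hb))
    · exact sub_le_iff_le_add'.mpr inf_le_right
  -- S is injective
  have hSposonly : ∀ f : E, 0 ≤ f → S f = 0 → f = 0 := fun f hf h0 =>
    hTsp f hf (by rw [← hTS f, h0, map_zero])
  have hSinj : Function.Injective S := by
    intro f g hfg
    have h1 : S (f - g) = 0 := by rw [map_sub, hfg, sub_self]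
    have h2 : S (g - f) = 0 := by rw [map_sub, hfg, sub_self]
    have hpos1 : S ((f - g) ⊔ 0) = 0 := by rw [hS, h1, map_zero, sup_idem]
    have hpos2 : S ((g - f) ⊔ 0) = 0 := by rw [hS, h2, map_zero, sup_idem]
    have e1 : (f - g) ⊔ 0 = 0 := hSposonly _ le_sup_right hpos1
    have e2 : (g - f) ⊔ 0 = 0 := hSposonly _ le_sup_right hpos2
    have l1 : f - g ≤ 0 := e1 ▸ le_sup_left
    have l2 : g - f ≤ 0 := e2 ▸ le_sup_left
    exact le_antisymm (sub_nonpos.mp l1) (sub_nonpos.mp l2)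
  -- properties of powers of S
  have hpow_sup : ∀ (k : ℕ) (f g : E), (S ^ k) (f ⊔ g) = (S ^ k) f ⊔ (S ^ k) g := by
    intro k
    induction k with
    | zero => intro f g; simp
    | succ n ih =>
      intro f g
      simp only [pow_succ, Module.End.mul_apply]
      rw [hS, ih]
  have hpow_e : ∀ k : ℕ, (S ^ k) e = e := by
    intro k
    induction k with
    | zero => simp
    | succ n ih => simp only [pow_succ, Module.End.mul_apply]; rw [hSe, ih]
  have hpow_inf : ∀ (k : ℕ) (f g : E), (S ^ k) (f ⊓ g) = (S ^ k) f ⊓ (S ^ k) g := by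
    intro k f g
    have h1 : f ⊓ g = f + g - f ⊔ g := eq_sub_of_add_eq (inf_add_sup f g)
    have h2 : (S ^ k) f ⊓ (S ^ k) g = (S ^ k) f + (S ^ k) g - (S ^ k) f ⊔ (S ^ k) g :=
      eq_sub_of_add_eq (inf_add_sup _ _)
    rw [h1, map_sub, map_add, hpow_sup, h2]
  have hpow_pos : ∀ (k : ℕ) (f : E), 0 ≤ f → 0 ≤ (S ^ k) f := by
    intro k f hf
    have h := hpow_sup k f 0
    rw [sup_eq_left.mpr hf, map_zero] at h
    rw [h]; exact le_sup_right
  have hpow_mono : ∀ (k : ℕ) (f g : E), f ≤ g → (S ^ k) f ≤ (S ^ k) g := by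
    intro k f g hfg
    have := hpow_pos k (g - f) (sub_nonneg.mpr hfg)
    rw [map_sub] at this
    exact sub_nonneg.mp this
  have hpow_inj : ∀ k : ℕ, Function.Injective ⇑(S ^ k) := by
    intro k
    induction k with
    | zero => intro a b h; simpa using h
    | succ n ih =>
      intro a b h
      simp only [pow_succ, Module.End.mul_apply] at h
      exact hSinj (ih h)
  have hpow_surj : ∀ k : ℕ, Function.Surjective ⇑(S ^ k) := by
    intro k
    induction k with
    | zero => intro x; exact ⟨x, by simp⟩
    | succ n ih =>
      intro x
      obtain ⟨y, hy⟩ := ih x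
      obtain ⟨z, hz⟩ := hSsurj y
      exact ⟨z, by simp only [pow_succ, Module.End.mul_apply]; rw [hz, hy]⟩
  have hreflect : ∀ (k : ℕ) (f g : E), (S ^ k) f ≤ (S ^ k) g → f ≤ g := by
    intro k f g h
    have h2 : (S ^ k) (f ⊔ g) = (S ^ k) g := by rw [hpow_sup]; exact sup_eq_right.mpr h
    exact sup_eq_right.mp (hpow_inj k h2)
  -- T is invariant under powers of S
  have hTpow : ∀ (k : ℕ) (f : E), T ((S ^ k) f) = T f := by
    intro k
    induction k with
    | zero => intro f; simp
    | succ n ih =>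
      intro f
      simp only [pow_succ, Module.End.mul_apply]
      rw [ih (S f), hTS]
  -- pull back q along S^(n+1)
  have hkey : ∀ n : ℕ, ∃ w : E, IsComponent e w ∧ (S ^ (n + 1)) w = q := by
    intro n
    obtain ⟨w, hw⟩ := hpow_surj (n + 1) q
    refine ⟨w, ⟨?_, ?_, ?_⟩, hw⟩
    · exact hreflect (n + 1) 0 w (by rw [map_zero, hw]; exact hq0)
    · exact hreflect (n + 1) w e (by rw [hw, hpow_e]; exact hqe)
    · apply hpow_inj (n + 1)
      rw [hpow_inf, map_sub, hw, hpow_e, map_zero, hqd]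
  choose w hwcomp hweq using hkey
  set pn : ℕ → E := fun n => p ⊓ w n with hpndef
  have hpn0 : ∀ n, 0 ≤ pn n := fun n => le_inf hp0 (hwcomp n).1
  have hpnp : ∀ n, pn n ≤ p := fun n => inf_le_left
  -- each pn n is a component of p
  have hpncomp : ∀ n, IsComponent p (pn n) := by
    intro n
    refine ⟨hpn0 n, hpnp n, ?_⟩
    have key : p - p ⊓ w n = p ⊔ w n - w n := by
      rw [sub_eq_sub_iff_add_eq_add, add_comm (p ⊔ w n), inf_add_sup]
    apply le_antisymm
    · calc pn n ⊓ (p - pn n) = (p ⊓ w n) ⊓ (p ⊔ w n - w n) := by rw [← key]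
        _ ≤ w n ⊓ (e - w n) :=
          inf_le_inf inf_le_right (sub_le_sub_right (sup_le hpe (hwcomp n).2.1) _)
        _ = 0 := (hwcomp n).2.2
    · exact le_inf (hpn0 n) (sub_nonneg.mpr (hpnp n))
  have hSpn_le : ∀ n : ℕ, (S ^ (n + 1)) (pn n) ≤ q := by
    intro n
    have : (S ^ (n + 1)) (pn n) = (S ^ (n + 1)) p ⊓ q := by
      rw [hpndef]; simp only []; rw [hpow_inf, hweq]
    rw [this]; exact inf_le_right
  -- the supremum u of the pn's
  have hub : p ∈ upperBounds (Set.range pn) := by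
    rintro x ⟨n, rfl⟩; exact hpnp n
  obtain ⟨u, hu⟩ := hDC (Set.range pn) ⟨pn 0, 0, rfl⟩ ⟨p, hub⟩
  have hup : u ≤ p := hu.2 hub
  have hpn_le_u : ∀ n, pn n ≤ u := fun n => hu.1 ⟨n, rfl⟩
  have hu0 : 0 ≤ u := (hpn0 0).trans (hpn_le_u 0)
  set N : E := p - u with hNdef
  have hN0 : 0 ≤ N := sub_nonneg.mpr hup
  have hNp : N ≤ p := sub_le_self p hu0
  have hNe : N ≤ e := hNp.trans hpe
  have hNq : N ≤ q := hNp.trans hpq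
  -- N is disjoint from each w n
  have hNw : ∀ n, N ⊓ w n = 0 := by
    intro n
    apply le_antisymm _ (le_inf hN0 (hwcomp n).1)
    have h1 : N ⊓ w n ≤ pn n := le_inf (inf_le_left.trans hNp) inf_le_right
    have h2 : N ⊓ w n ≤ p - pn n :=
      inf_le_left.trans (sub_le_sub_left (hpn_le_u n) p)
    calc N ⊓ w n ≤ pn n ⊓ (p - pn n) := le_inf h1 h2
      _ = 0 := (hpncomp n).2.2
  -- images of N avoid q
  have hNq_im : ∀ n : ℕ, (S ^ (n + 1)) N ⊓ q = 0 := by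
    intro n
    rw [← hweq n, ← hpow_inf, hNw n, map_zero]
  -- images of N are pairwise disjoint
  have hdisj : ∀ i j : ℕ, i < j → (S ^ (i + 1)) N ⊓ (S ^ (j + 1)) N = 0 := by
    intro i j hij
    have hji : j + 1 = (i + 1) + (j - i) := by omega
    have hsplit : (S ^ (j + 1)) N = (S ^ (i + 1)) ((S ^ (j - i)) N) := by
      rw [hji, pow_add, Module.End.mul_apply]
    obtain ⟨d, hd⟩ : ∃ d, j - i = d + 1 := ⟨j - i - 1, by omega⟩
    have hinner : N ⊓ (S ^ (j - i)) N = 0 := by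
      apply le_antisymm _ (le_inf hN0 (hpow_pos _ _ hN0))
      calc N ⊓ (S ^ (j - i)) N ≤ q ⊓ (S ^ (j - i)) N := inf_le_inf_right _ hNq
        _ = (S ^ (d + 1)) N ⊓ q := by rw [inf_comm, hd]
        _ = 0 := hNq_im d
    rw [hsplit, ← hpow_inf, hinner, map_zero]
  -- finite sums of the images
  set F : ℕ → E := fun n => ∑ i ∈ Finset.range n, (S ^ (i + 1)) N with hFdef
  have hF0 : ∀ n, 0 ≤ F n := by
    intro n
    induction n with
    | zero => simp only [hFdef, Finset.sum_range_zero]; exact le_refl 0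
    | succ k ih =>
      have hsum : F (k + 1) = F k + (S ^ (k + 1)) N := by
        simp only [hFdef]; rw [Finset.sum_range_succ]
      rw [hsum]
      exact add_nonneg ih (hpow_pos _ _ hN0)
  have hFdis : ∀ n m : ℕ, n ≤ m → F n ⊓ (S ^ (m + 1)) N = 0 := by
    intro n
    induction n with
    | zero =>
      intro m _
      simp only [hFdef, Finset.sum_range_zero]
      exact inf_eq_left.mpr (hpow_pos _ _ hN0)
    | succ k ih =>
      intro m hm
      have hsum : F (k + 1) = F k + (S ^ (k + 1)) N := by
        simp only [hFdef]; rw [Finset.sum_range_succ]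
      apply le_antisymm
      · calc F (k + 1) ⊓ (S ^ (m + 1)) N
            = (S ^ (m + 1)) N ⊓ (F k + (S ^ (k + 1)) N) := by rw [hsum, inf_comm]
          _ ≤ (S ^ (m + 1)) N ⊓ F k + (S ^ (m + 1)) N ⊓ (S ^ (k + 1)) N :=
            hsubadd _ _ _ (hpow_pos _ _ hN0) (hF0 k) (hpow_pos _ _ hN0)
          _ = 0 := by
            rw [inf_comm ((S ^ (m + 1)) N) (F k), ih m (by omega),
              inf_comm ((S ^ (m + 1)) N), hdisj k m (by omega), add_zero]
      · exact le_inf (hF0 _) (hpow_pos _ _ hN0)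
  -- the finite sums are bounded by e
  have hFe : ∀ n, F n ≤ e := by
    intro n
    induction n with
    | zero => simp only [hFdef, Finset.sum_range_zero]; exact he
    | succ k ih =>
      have hsum : F (k + 1) = F k + (S ^ (k + 1)) N := by
        simp only [hFdef]; rw [Finset.sum_range_succ]
      have hd : F k ⊓ (S ^ (k + 1)) N = 0 := hFdis k k le_rfl
      have heq : F k + (S ^ (k + 1)) N = F k ⊔ (S ^ (k + 1)) N := by
        have h := inf_add_sup (F k) ((S ^ (k + 1)) N)
        rw [hd, zero_add] at h
        exact h.symm
      rw [hsum, heq]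
      refine sup_le ih ?_
      calc (S ^ (k + 1)) N ≤ (S ^ (k + 1)) e := hpow_mono _ _ _ hNe
        _ = e := hpow_e _
  -- T of the sums
  have hTF : ∀ n : ℕ, T (F n) = n • T N := by
    intro n
    simp only [hFdef]
    rw [map_sum]
    have : ∀ i ∈ Finset.range n, T ((S ^ (i + 1)) N) = T N := fun i _ => hTpow _ _
    rw [Finset.sum_congr rfl this, Finset.sum_const, Finset.card_range]
  -- Archimedean argument: T N = 0, hence N = 0
  have hTN : T N = 0 := by
    apply hArch (T N) e (hTpos N hN0) he
    intro n
    calc n • T N = T (F n) := (hTF n).symm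
      _ ≤ e := by
        have := hTpos (e - F n) (sub_nonneg.mpr (hFe n))
        rw [map_sub, hTe] at this
        exact sub_nonneg.mp this
  have hNzero : N = 0 := hTsp N hN0 hTN
  have hup' : u = p := (sub_eq_zero.mp hNzero).symm
  exact ⟨pn, hpncomp, hup' ▸ hu, hSpn_le⟩
end

section
/- Let E be a Dedekind complete Riesz space, let e ∈ E with e ≥ 0, let S : E → E be a bijective Riesz homomorphism with S e = e, and let p be a component of e. Then for every n ≥ 1, the supremum of the set {q ∈ E : q is a component of p and p ⊓ Sʲ q = 0 for all j = 1, …, n} exists in E and equals p ⊓ (e − S^{-1} p) ⊓ (e − S^{-2} p) ⊓ ⋯ ⊓ (e − S^{-n} p). -/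
section Aux

variable {E : Type*} [AddCommGroup E] [Lattice E]
  [CovariantClass E E (· + ·) (· ≤ ·)] [Module ℝ E]

lemma rieszHom_mono (T : E →ₗ[ℝ] E) (hT : ∀ f g : E, T (f ⊔ g) = T f ⊔ T g)
    {f g : E} (h : f ≤ g) : T f ≤ T g := by
  have h1 : T g = T f ⊔ T g := by rw [← hT, sup_eq_right.2 h]
  rw [h1]; exact le_sup_left

lemma rieszHom_inf (T : E →ₗ[ℝ] E) (hT : ∀ f g : E, T (f ⊔ g) = T f ⊔ T g)
    (f g : E) : T (f ⊓ g) = T f ⊓ T g := by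
  have h2 : f ⊓ g = f + g - (f ⊔ g) := by rw [← inf_add_sup f g]; abel
  have h1 : T (f ⊓ g) = T f + T g - (T f ⊔ T g) := by
    rw [h2, map_sub, map_add, hT]
  rw [h1, ← inf_add_sup (T f) (T g)]; abel

lemma isComponent_inf (e a b : E) (ha : IsComponent e a) (hb : IsComponent e b) :
    IsComponent e (a ⊓ b) := by
  letI := AddCommGroup.toDistribLattice E
  refine ⟨le_inf ha.1 hb.1, inf_le_left.trans ha.2.1, ?_⟩
  have h1 : a ⊓ b ⊓ (e - a) = 0 := by
    refine le_antisymm ?_ (le_inf (le_inf ha.1 hb.1) (sub_nonneg.2 ha.2.1))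
    calc a ⊓ b ⊓ (e - a) ≤ a ⊓ (e - a) := inf_le_inf_right _ inf_le_left
    _ = 0 := ha.2.2
  have h2 : a ⊓ b ⊓ (e - b) = 0 := by
    refine le_antisymm ?_ (le_inf (le_inf ha.1 hb.1) (sub_nonneg.2 hb.2.1))
    calc a ⊓ b ⊓ (e - b) ≤ b ⊓ (e - b) := inf_le_inf_right _ inf_le_right
    _ = 0 := hb.2.2
  rw [sub_inf, inf_sup_left, h1, h2, sup_idem]

lemma isComponent_inf' {ι : Type*} (e : E) (s : Finset ι) (hs : s.Nonempty)
    (f : ι → E) (h : ∀ j ∈ s, IsComponent e (f j)) :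
    IsComponent e (s.inf' hs f) := by
  induction hs using Finset.Nonempty.cons_induction with
  | singleton a => simpa using h a (by simp)
  | cons a s ha hs ih =>
      rw [Finset.inf'_cons hs]
      exact isComponent_inf e _ _ (h a (Finset.mem_cons_self a s))
        (ih fun j hj => h j (Finset.mem_cons_of_mem hj))

end Aux

/-- In a Dedekind complete Riesz space, for a bijective Riesz homomorphism `S` with `S e = e`
(inverse `S'`) and a component `p` of `e`, for each `n ≥ 1` the supremum of the set of
components `q` of `p` with `p ⊓ Sʲ q = 0` for `j = 1, …, n` exists and equals
`p ⊓ ⨅_{j=1}^{n} (e - S^{-j} p)`. -/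
theorem sup_nonrecurrent_components_eq
    {E : Type*} [AddCommGroup E] [Lattice E]
    [CovariantClass E E (· + ·) (· ≤ ·)] [Module ℝ E] [PosSMulMono ℝ E]
    (hDC : ∀ s : Set E, s.Nonempty → BddAbove s → ∃ a : E, IsLUB s a)
    (e : E) (he : 0 ≤ e)
    (S S' : E →ₗ[ℝ] E) (hS : ∀ f g : E, S (f ⊔ g) = S f ⊔ S g)
    (hS'S : ∀ x : E, S' (S x) = x) (hSS' : ∀ x : E, S (S' x) = x)
    (hSe : S e = e)
    (p : E) (hp : IsComponent e p)
    (n : ℕ) (hn : 1 ≤ n) :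
    IsLUB {q : E | IsComponent p q ∧ ∀ j ∈ Finset.Icc 1 n, p ⊓ (S ^ j) q = 0}
      (p ⊓ (Finset.Icc 1 n).inf' (Finset.nonempty_Icc.2 hn)
        (fun j : ℕ => e - (S' ^ j) p)) := by
  -- S' is also a Riesz homomorphism
  have hS' : ∀ f g : E, S' (f ⊔ g) = S' f ⊔ S' g := by
    intro f g
    conv_lhs => rw [← hSS' f, ← hSS' g, ← hS, hS'S]
  have hS'e : S' e = e := by conv_lhs => rw [← hSe, hS'S]
  -- powers preserve sup
  have hpow_sup : ∀ (j : ℕ) (f g : E), (S ^ j) (f ⊔ g) = (S ^ j) f ⊔ (S ^ j) g := by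
    intro j
    induction j with
    | zero => intro f g; simp
    | succ j ih =>
        intro f g
        rw [pow_succ, Module.End.mul_apply, Module.End.mul_apply, Module.End.mul_apply, hS, ih]
  have hpow_sup' : ∀ (j : ℕ) (f g : E), (S' ^ j) (f ⊔ g) = (S' ^ j) f ⊔ (S' ^ j) g := by
    intro j
    induction j with
    | zero => intro f g; simp
    | succ j ih =>
        intro f g
        rw [pow_succ, Module.End.mul_apply, Module.End.mul_apply, Module.End.mul_apply, hS', ih]
  have hpow_e : ∀ j : ℕ, (S ^ j) e = e := by
    intro j; induction j with
    | zero => simp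
    | succ j ih => rw [pow_succ', Module.End.mul_apply, ih, hSe]
  have hpow_e' : ∀ j : ℕ, (S' ^ j) e = e := by
    intro j; induction j with
    | zero => simp
    | succ j ih => rw [pow_succ', Module.End.mul_apply, ih, hS'e]
  have hinv : ∀ (j : ℕ) (x : E), (S ^ j) ((S' ^ j) x) = x := by
    intro j; induction j with
    | zero => intro x; simp
    | succ j ih =>
        intro x
        rw [pow_succ' S, pow_succ S', Module.End.mul_apply, Module.End.mul_apply, ih, hSS']
  have hinv2 : ∀ (j : ℕ) (x : E), (S' ^ j) ((S ^ j) x) = x := by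
    intro j; induction j with
    | zero => intro x; simp
    | succ j ih =>
        intro x
        rw [pow_succ' S', pow_succ S, Module.End.mul_apply, Module.End.mul_apply, ih, hS'S]
  set t : E := (Finset.Icc 1 n).inf' (Finset.nonempty_Icc.2 hn)
    (fun j : ℕ => e - (S' ^ j) p) with ht
  -- each e - S'^j p is a component of e
  have hcj : ∀ j : ℕ, IsComponent e (e - (S' ^ j) p) := by
    intro j
    have h0 : (0:E) ≤ (S' ^ j) p := by
      have := rieszHom_mono (S' ^ j) (hpow_sup' j) hp.1
      simpa using this
    have h1 : (S' ^ j) p ≤ e := by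
      have := rieszHom_mono (S' ^ j) (hpow_sup' j) hp.2.1
      rwa [hpow_e' j] at this
    have h2 : (S' ^ j) p ⊓ (e - (S' ^ j) p) = 0 := by
      have := rieszHom_inf (S' ^ j) (hpow_sup' j) p (e - p)
      rw [hp.2.2, map_zero, map_sub, hpow_e' j] at this
      exact this.symm
    exact ⟨sub_nonneg.2 h1, sub_le_self _ h0, by rwa [sub_sub_cancel, inf_comm]⟩
  -- t is a component of e
  have hct : IsComponent e t := by
    exact isComponent_inf' e _ _ _ (fun j _ => hcj j)
  -- M := p ⊓ t is a component of e
  have hcM : IsComponent e (p ⊓ t) := isComponent_inf e p t hp hct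
  -- M is a component of p
  have hMp : IsComponent p (p ⊓ t) := by
    refine ⟨hcM.1, inf_le_left, le_antisymm ?_ (le_inf hcM.1 (sub_nonneg.2 inf_le_left))⟩
    calc p ⊓ t ⊓ (p - p ⊓ t) ≤ p ⊓ t ⊓ (e - p ⊓ t) :=
          inf_le_inf_left _ (sub_le_sub_right hp.2.1 _)
    _ = 0 := hcM.2.2
  -- M belongs to the set
  have hMmem : (p ⊓ t) ∈ {q : E | IsComponent p q ∧ ∀ j ∈ Finset.Icc 1 n, p ⊓ (S ^ j) q = 0} := by
    refine ⟨hMp, fun j hj => ?_⟩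
    have hMle : p ⊓ t ≤ e - (S' ^ j) p :=
      inf_le_right.trans (Finset.inf'_le _ hj)
    have h1 : (S ^ j) (p ⊓ t) ≤ e - p := by
      have := rieszHom_mono (S ^ j) (hpow_sup j) hMle
      rwa [map_sub, hpow_e j, hinv j] at this
    have h0 : (0:E) ≤ (S ^ j) (p ⊓ t) := by
      have := rieszHom_mono (S ^ j) (hpow_sup j) hcM.1
      simpa using this
    refine le_antisymm ?_ (le_inf hp.1 h0)
    calc p ⊓ (S ^ j) (p ⊓ t) ≤ p ⊓ (e - p) := inf_le_inf_left _ h1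
    _ = 0 := hp.2.2
  -- M is an upper bound
  have hub : (p ⊓ t) ∈
      upperBounds {q : E | IsComponent p q ∧ ∀ j ∈ Finset.Icc 1 n, p ⊓ (S ^ j) q = 0} := by
    rintro q ⟨hq, hqj⟩
    refine le_inf hq.2.1 (Finset.le_inf' _ _ fun j hj => ?_)
    -- q ⊓ S'^j p = 0
    have hd : q ⊓ (S' ^ j) p = 0 := by
      have hSjinj : Function.Injective (S ^ j) := by
        intro x y hxy
        have h := congrArg (S' ^ j) hxy
        rwa [hinv2 j x, hinv2 j y] at h
      apply hSjinj
      rw [rieszHom_inf (S ^ j) (hpow_sup j), hinv j, map_zero, inf_comm]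
      exact hqj j hj
    have hq0 : (0:E) ≤ q := hq.1
    have hqe : q ≤ e := hq.2.1.trans hp.2.1
    have hjp0 : (0:E) ≤ (S' ^ j) p := by
      have := rieszHom_mono (S' ^ j) (hpow_sup' j) hp.1
      simpa using this
    have hjpe : (S' ^ j) p ≤ e := by
      have := rieszHom_mono (S' ^ j) (hpow_sup' j) hp.2.1
      rwa [hpow_e' j] at this
    -- q + S'^j p = q ⊔ S'^j p ≤ e
    have hsum : q + (S' ^ j) p = q ⊔ (S' ^ j) p := by
      have := inf_add_sup q ((S' ^ j) p)
      rw [hd, zero_add] at this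
      exact this.symm
    rw [le_sub_iff_add_le, hsum]
    exact sup_le hqe hjpe
  exact ⟨hub, fun b hb => hb hMmem⟩
end

section
/- Let E be a Riesz space, let e ∈ E with e ≥ 0, let S : E → E be a bijective Riesz homomorphism with S e = e, and let p be a component of e. Define N_p(0) := p and, for n ≥ 1, N_p(n) := p ⊓ ⨅_{j=1}^{n} (e − S^{-j} p). Then for every k ≥ 1, N_p(k−1) − N_p(k) = S^{-k} p ⊓ N_p(k−1). -/
private lemma sub_inf_eq {E : Type*} [AddCommGroup E] [Lattice E]
    [CovariantClass E E (· + ·) (· ≤ ·)] (x y : E) :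
    x - x ⊓ y = 0 ⊔ (x - y) := by
  rw [sub_eq_add_neg, neg_inf, add_sup, add_neg_cancel, ← sub_eq_add_neg]

private lemma key_comp {E : Type*} [AddCommGroup E] [Lattice E]
    [CovariantClass E E (· + ·) (· ≤ ·)] (e a q : E)
    (ha0 : 0 ≤ a) (hae : a ≤ e) (hq0 : 0 ≤ q) (hqe : q ≤ e)
    (hqc : q ⊓ (e - q) = 0) :
    a - a ⊓ (e - q) = q ⊓ a := by
  rw [sub_inf_eq]
  apply le_antisymm
  · apply sup_le (le_inf hq0 ha0)
    refine le_inf ?_ ?_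
    · calc a - (e - q) ≤ e - (e - q) := sub_le_sub_right hae _
      _ = q := sub_sub_cancel e q
    · simpa using sub_le_self a (sub_nonneg.2 hqe)
  · have h2 : (q ⊓ a) ⊓ (e - q) = 0 :=
      le_antisymm (le_trans (inf_le_inf_right _ inf_le_left) hqc.le)
        (le_inf (le_inf hq0 ha0) (sub_nonneg.2 hqe))
    calc q ⊓ a = q ⊓ a - (q ⊓ a) ⊓ (e - q) := by rw [h2, sub_zero]
    _ = 0 ⊔ (q ⊓ a - (e - q)) := sub_inf_eq _ _
    _ ≤ 0 ⊔ (a - (e - q)) := sup_le_sup_left (sub_le_sub_right inf_le_right _) _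

/-- For a bijective Riesz homomorphism `S` with `S e = e` (inverse `S'`) and a component `p`
of `e`, defining `N 0 = p` and `N n = p ⊓ ⨅_{j=1}^{n} (e - S^{-j} p)` for `n ≥ 1`, one has
`N (k-1) - N k = S^{-k} p ⊓ N (k-1)` for every `k ≥ 1`. -/
theorem np_difference_eq
    {E : Type*} [AddCommGroup E] [Lattice E]
    [CovariantClass E E (· + ·) (· ≤ ·)] [Module ℝ E] [PosSMulMono ℝ E]
    (e : E) (he : 0 ≤ e)
    (S S' : E →ₗ[ℝ] E) (hS : ∀ f g : E, S (f ⊔ g) = S f ⊔ S g)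
    (hS'S : ∀ x : E, S' (S x) = x) (hSS' : ∀ x : E, S (S' x) = x)
    (hSe : S e = e)
    (p : E) (hp : IsComponent e p)
    (N : ℕ → E) (hN0 : N 0 = p)
    (hN : ∀ (n : ℕ) (hn : 1 ≤ n), N n =
      p ⊓ (Finset.Icc 1 n).inf' (Finset.nonempty_Icc.2 hn)
        (fun j : ℕ => e - (S' ^ j) p)) :
    ∀ k : ℕ, 1 ≤ k → N (k - 1) - N k = (S' ^ k) p ⊓ N (k - 1) := by
  obtain ⟨hp0, hpe, hpc⟩ := hp
  -- S' preserves sup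
  have hS' : ∀ f g : E, S' (f ⊔ g) = S' f ⊔ S' g := by
    intro f g
    conv_lhs => rw [← hSS' f, ← hSS' g, ← hS, hS'S]
  have hS'k : ∀ (k : ℕ) (f g : E), (S' ^ k) (f ⊔ g) = (S' ^ k) f ⊔ (S' ^ k) g := by
    intro k
    induction k with
    | zero => simp
    | succ n ih =>
      intro f g
      rw [pow_succ, Module.End.mul_apply, hS', ih, Module.End.mul_apply, Module.End.mul_apply]
  have hmono : ∀ (k : ℕ) (f g : E), f ≤ g → (S' ^ k) f ≤ (S' ^ k) g := by
    intro k f g hfg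
    have h := hS'k k f g
    rw [sup_eq_right.2 hfg] at h
    exact le_sup_left.trans h.ge
  have hinf : ∀ (k : ℕ) (f g : E), (S' ^ k) (f ⊓ g) = (S' ^ k) f ⊓ (S' ^ k) g := by
    intro k f g
    have : f ⊓ g = -(-f ⊔ -g) := by rw [neg_sup, neg_neg, neg_neg]
    rw [this, map_neg, hS'k, map_neg, map_neg, neg_sup, neg_neg, neg_neg]
  have hS'e : ∀ k : ℕ, (S' ^ k) e = e := by
    intro k
    induction k with
    | zero => simp
    | succ n ih =>
      rw [pow_succ, Module.End.mul_apply]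
      have hSe' : S' e = e := by nth_rewrite 1 [← hSe]; rw [hS'S]
      rw [hSe', ih]
  -- properties of q = S'^k p
  have hq0 : ∀ k : ℕ, 0 ≤ (S' ^ k) p := fun k => by
    simpa using hmono k 0 p hp0
  have hqe : ∀ k : ℕ, (S' ^ k) p ≤ e := fun k => by
    simpa [hS'e k] using hmono k p e hpe
  have hqc : ∀ k : ℕ, (S' ^ k) p ⊓ (e - (S' ^ k) p) = 0 := fun k => by
    have := hinf k p (e - p)
    rw [hpc, map_zero, map_sub, hS'e k] at this
    exact this.symm
  -- bounds on N
  have hN0' : ∀ n : ℕ, 0 ≤ N n := by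
    intro n
    rcases Nat.eq_zero_or_pos n with h | h
    · rw [h, hN0]; exact hp0
    · rw [hN n h]
      refine le_inf hp0 (Finset.le_inf' _ _ fun j _ => sub_nonneg.2 (hqe j))
  have hNe : ∀ n : ℕ, N n ≤ e := by
    intro n
    rcases Nat.eq_zero_or_pos n with h | h
    · rw [h, hN0]; exact hpe
    · rw [hN n h]; exact inf_le_left.trans hpe
  -- recursion: N k = N (k-1) ⊓ (e - S'^k p)
  have hrec : ∀ k : ℕ, 1 ≤ k → N k = N (k - 1) ⊓ (e - (S' ^ k) p) := by
    intro k hk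
    rcases Nat.lt_or_ge k 2 with h2 | h2
    · interval_cases k
      rw [hN 1 le_rfl, hN0]
      simp
    · have hk1 : 1 ≤ k - 1 := by omega
      have hne : (Finset.Icc 1 (k - 1)).Nonempty := Finset.nonempty_Icc.2 hk1
      have hmain : (Finset.Icc 1 k).inf' (Finset.nonempty_Icc.2 hk)
          (fun j : ℕ => e - (S' ^ j) p)
          = (Finset.Icc 1 (k - 1)).inf' hne (fun j : ℕ => e - (S' ^ j) p)
            ⊓ (e - (S' ^ k) p) := by
        apply le_antisymm
        · refine le_inf (Finset.le_inf' _ _ fun j hj => Finset.inf'_le _ ?_)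
            (Finset.inf'_le _ ?_)
          · simp only [Finset.mem_Icc] at hj ⊢; omega
          · simp only [Finset.mem_Icc]; omega
        · refine Finset.le_inf' _ _ fun j hj => ?_
          simp only [Finset.mem_Icc] at hj
          rcases eq_or_ne j k with rfl | hjk
          · exact inf_le_right
          · exact inf_le_left.trans
              (Finset.inf'_le _ (by simp only [Finset.mem_Icc]; omega))
      rw [hN k hk, hN (k - 1) hk1, hmain, ← inf_assoc]
  intro k hk
  rw [hrec k hk]
  exact key_comp e (N (k - 1)) ((S' ^ k) p) (hN0' _) (hNe _) (hq0 k) (hqe k) (hqc k)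
end

section
/- Let E be a Riesz space, let e ∈ E with e ≥ 0, let S : E → E be a bijective Riesz homomorphism with S e = e, let L : E → E be a linear map with L ∘ S = L, and let r be a component of e. Then for every n ≥ 1: L r = Σ_{k=1}^{n} L( (e − r) ⊓ ⨅_{j=1}^{k} S^{-j} r ) + L( ⨅_{k=0}^{n} S^{-k} r ), where ⨅_{k=0}^{n} S^{-k} r = r ⊓ S^{-1} r ⊓ ⋯ ⊓ S^{-n} r. -/
/-- For a bijective Riesz homomorphism `S` with `S e = e` (inverse `S'`), a linear map `L`
with `L ∘ S = L`, and a component `r` of `e`, for every `n ≥ 1` one has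
`L r = ∑_{k=1}^{n} L((e - r) ⊓ ⨅_{j=1}^{k} S^{-j} r) + L(⨅_{k=0}^{n} S^{-k} r)`. -/
theorem L_decomposition_formula
    {E : Type*} [AddCommGroup E] [Lattice E]
    [CovariantClass E E (· + ·) (· ≤ ·)] [Module ℝ E] [PosSMulMono ℝ E]
    (e : E) (he : 0 ≤ e)
    (S S' : E →ₗ[ℝ] E) (hS : ∀ f g : E, S (f ⊔ g) = S f ⊔ S g)
    (hS'S : ∀ x : E, S' (S x) = x) (hSS' : ∀ x : E, S (S' x) = x)
    (hSe : S e = e)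
    (L : E →ₗ[ℝ] E) (hLS : ∀ f : E, L (S f) = L f)
    (r : E) (hr : IsComponent e r) :
    ∀ n : ℕ, 1 ≤ n →
      L r = (∑ k ∈ Finset.range n,
          L ((e - r) ⊓ (Finset.Icc 1 (k + 1)).inf'
            (Finset.nonempty_Icc.2 (Nat.one_le_iff_ne_zero.2 (Nat.succ_ne_zero k)))
            (fun j : ℕ => (S' ^ j) r)))
        + L ((Finset.Icc 0 n).inf' (Finset.nonempty_Icc.2 (Nat.zero_le n))
            (fun k : ℕ => (S' ^ k) r)) := by
  obtain ⟨hr0, hre, hrd⟩ := hr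
  have her : (0 : E) ≤ e - r := sub_nonneg.2 hre
  -- S preserves inf
  have hSinf : ∀ f g : E, S (f ⊓ g) = S f ⊓ S g := by
    intro f g
    have h2 : S (f ⊓ g) + S (f ⊔ g) = S f + S g := by
      rw [← map_add, inf_add_sup]
      exact map_add S f g
    rw [hS] at h2
    have h3 : S f ⊓ S g + (S f ⊔ S g) = S f + S g := inf_add_sup _ _
    exact add_right_cancel (h2.trans h3.symm)
  have hS'inf : ∀ f g : E, S' (f ⊓ g) = S' f ⊓ S' g := by
    intro f g
    conv_lhs => rw [← hSS' f, ← hSS' g, ← hSinf, hS'S]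
  have hS'mono : ∀ {a b : E}, a ≤ b → S' a ≤ S' b := by
    intro a b hab
    have h := hS'inf a b
    rw [inf_eq_left.2 hab] at h
    exact inf_eq_left.1 h.symm
  have hS'e : S' e = e := by
    have h := hS'S e; rwa [hSe] at h
  set P : ℕ → E := fun k => (S' ^ k) r with hP
  have hP0 : P 0 = r := by simp [hP]
  have hPsucc : ∀ k : ℕ, P (k + 1) = S' (P k) := by
    intro k; simp [hP, pow_succ', Module.End.mul_apply]
  have hpow : ∀ j : ℕ, 0 ≤ P j ∧ P j ≤ e := by
    intro j
    induction j with
    | zero => rw [hP0]; exact ⟨hr0, hre⟩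
    | succ j ih =>
      rw [hPsucc]
      constructor
      · have := hS'mono ih.1; rwa [map_zero] at this
      · rw [← hS'e]; exact hS'mono ih.2
  -- distributivity
  have hdistrib : ∀ a b c : E, (a ⊔ b) ⊓ c = (a ⊓ c) ⊔ (b ⊓ c) := by
    intro a b c
    have h := @inf_sup_right E (AddCommGroup.toDistribLattice E) a b c
    exact h
  have hsup : r ⊔ (e - r) = e := by
    have h := inf_add_sup r (e - r)
    rw [hrd, zero_add] at h
    rw [h]; abel
  have hdecomp : ∀ q : E, 0 ≤ q → q ≤ e → r ⊓ q + (e - r) ⊓ q = q := by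
    intro q hq0 hqe
    have hinf0 : (r ⊓ q) ⊓ ((e - r) ⊓ q) = 0 :=
      le_antisymm ((inf_le_inf inf_le_left inf_le_left).trans hrd.le)
        (le_inf (le_inf hr0 hq0) (le_inf her hq0))
    have hsup2 : (r ⊓ q) ⊔ ((e - r) ⊓ q) = q := by
      rw [← hdistrib, hsup, inf_eq_right.2 hqe]
    calc r ⊓ q + (e - r) ⊓ q
        = (r ⊓ q) ⊓ ((e - r) ⊓ q) + ((r ⊓ q) ⊔ ((e - r) ⊓ q)) := (inf_add_sup _ _).symm
      _ = q := by rw [hinf0, hsup2, zero_add]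
  -- notation for the infima
  have hne1 : ∀ n : ℕ, (Finset.Icc 1 (n + 1)).Nonempty :=
    fun n => Finset.nonempty_Icc.2 (Nat.succ_le_succ (Nat.zero_le n))
  have hne0 : ∀ n : ℕ, (Finset.Icc 0 n).Nonempty :=
    fun n => Finset.nonempty_Icc.2 (Nat.zero_le n)
  set q : ℕ → E := fun n => (Finset.Icc 1 (n + 1)).inf' (hne1 n) P with hq
  set p : ℕ → E := fun n => (Finset.Icc 0 n).inf' (hne0 n) P with hp
  have hq0 : ∀ n, 0 ≤ q n := by
    intro n
    exact Finset.le_inf' _ _ (fun j _ => (hpow j).1)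
  have hqe : ∀ n, q n ≤ e := by
    intro n
    exact (Finset.inf'_le _ (Finset.mem_Icc.2 ⟨le_refl 1, Nat.succ_le_succ (Nat.zero_le n)⟩)).trans
      (hpow 1).2
  have hSq : ∀ n : ℕ, S (q n) = p n := by
    intro n
    have himg : Finset.Icc 1 (n + 1) = (Finset.Icc 0 n).image (· + 1) := by
      rw [Finset.image_add_right_Icc]
    rw [hq, hp]
    simp only
    rw [Finset.apply_inf'_eq_inf'_comp _ S hSinf]
    rw [Finset.inf'_congr (hne1 n) himg (fun _ _ => rfl),
      Finset.inf'_image]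
    exact Finset.inf'_congr _ rfl (fun k _ => by
      simp only [Function.comp, hPsucc, hSS'])
  have hrq : ∀ n : ℕ, r ⊓ q n = p (n + 1) := by
    intro n
    have hins : insert 0 (Finset.Icc 1 (n + 1)) = Finset.Icc 0 (n + 1) := by
      have h01 := Finset.Icc_add_one_left_eq_Ioc (0 : ℕ) (n + 1); rw [zero_add] at h01
      rw [h01, Finset.Ioc_insert_left (Nat.zero_le (n + 1))]
    have h2 : (Finset.Icc 0 (n + 1)).inf' (hne0 (n + 1)) P
        = (insert 0 (Finset.Icc 1 (n + 1))).inf'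
          (Finset.insert_nonempty _ _) P :=
      Finset.inf'_congr (hne0 (n + 1)) hins.symm (fun _ _ => rfl)
    rw [hp]
    simp only
    rw [h2, Finset.inf'_insert (H := hne1 n), hP0]
  have key : ∀ n : ℕ, L (p n) = L ((e - r) ⊓ q n) + L (p (n + 1)) := by
    intro n
    have h1 : L (p n) = L (q n) := by rw [← hSq n, hLS]
    rw [h1, ← hrq n]
    conv_lhs => rw [← hdecomp (q n) (hq0 n) (hqe n)]
    rw [map_add, add_comm]
  suffices h : ∀ n : ℕ, L r = (∑ k ∈ Finset.range n, L ((e - r) ⊓ q k)) + L (p n) by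
    intro n _
    exact h n
  intro n
  induction n with
  | zero =>
    simp only [Finset.range_zero, Finset.sum_empty, zero_add]
    rw [hp]
    simp [hP0]
  | succ n ih =>
    rw [Finset.sum_range_succ, add_assoc, ← key n]
    exact ih
end

section
/- Let (Ω, 𝒜, μ) be a probability space, let τ : Ω → Ω be an invertible measure-preserving transformation, and let A ∈ 𝒜. Then the first return time n_A is integrable and ∫_Ω n_A dμ = μ( ⋃_{k≥0} τ^{-k}(A) ). -/
open MeasureTheory Classical

/-- The first return time of `x` to `A` under `τ`: the least `n ≥ 1` with `τⁿ x ∈ A` if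
`x ∈ A` and such an `n` exists, and `0` otherwise. -/
noncomputable def firstReturn {Ω : Type*} (τ : Ω → Ω) (A : Set Ω) (x : Ω) : ℝ :=
  if h : x ∈ A ∧ ∃ n : ℕ, 1 ≤ n ∧ τ^[n] x ∈ A then (Nat.find h.2 : ℝ) else 0

section KacAux

variable {Ω : Type*} [MeasurableSpace Ω]

/-- ℕ-valued first return time. -/
noncomputable def rtN (τ : Ω → Ω) (A : Set Ω) (x : Ω) : ℕ :=
  if h : x ∈ A ∧ ∃ n : ℕ, 1 ≤ n ∧ τ^[n] x ∈ A then Nat.find h.2 else 0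

lemma firstReturn_eq_rtN (τ : Ω → Ω) (A : Set Ω) (x : Ω) :
    firstReturn τ A x = (rtN τ A x : ℝ) := by
  unfold firstReturn rtN; split <;> simp

lemma rtN_eq_zero_iff (τ : Ω → Ω) (A : Set Ω) (x : Ω) :
    rtN τ A x = 0 ↔ ¬(x ∈ A ∧ ∃ n : ℕ, 1 ≤ n ∧ τ^[n] x ∈ A) := by
  unfold rtN; split
  · rename_i h
    have h1 := (Nat.find_spec h.2).1
    exact iff_of_false (by omega) (not_not_intro h)
  · rename_i h
    simp [h]

lemma rtN_eq_succ_iff (τ : Ω → Ω) (A : Set Ω) (x : Ω) (n : ℕ) :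
    rtN τ A x = n + 1 ↔
      x ∈ A ∧ τ^[n+1] x ∈ A ∧ ∀ j, j < n + 1 → ¬(1 ≤ j ∧ τ^[j] x ∈ A) := by
  unfold rtN; split
  · rename_i h
    rw [Nat.find_eq_iff]
    constructor
    · rintro ⟨⟨-, h2⟩, h3⟩; exact ⟨h.1, h2, h3⟩
    · rintro ⟨-, h2, h3⟩; exact ⟨⟨by omega, h2⟩, h3⟩
  · rename_i h
    exact iff_of_false (by omega) fun hy => h ⟨hy.1, n + 1, by omega, hy.2.1⟩

lemma succ_le_rtN_iff (τ : Ω → Ω) (A : Set Ω) (x : Ω) (n : ℕ) :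
    n + 1 ≤ rtN τ A x ↔
      (x ∈ A ∧ ∃ m : ℕ, 1 ≤ m ∧ τ^[m] x ∈ A) ∧ ∀ j, 1 ≤ j → j ≤ n → τ^[j] x ∉ A := by
  unfold rtN; split
  · rename_i h
    rw [Nat.add_one_le_iff, Nat.lt_find_iff]
    constructor
    · intro h2; exact ⟨h, fun j hj1 hj2 hjA => h2 j hj2 ⟨hj1, hjA⟩⟩
    · rintro ⟨-, h2⟩ j hj ⟨hj1, hjA⟩; exact h2 j hj1 hj hjA
  · rename_i h
    exact iff_of_false (by omega) fun hy => h hy.1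

lemma rtN_measurable {τ : Ω → Ω} {A : Set Ω} (hτm : Measurable τ) (hA : MeasurableSet A) :
    Measurable (rtN τ A) := by
  apply measurable_to_countable'
  intro n
  match n with
  | 0 =>
    have : rtN τ A ⁻¹' {0} = (A ∩ ⋃ m : ℕ, τ^[m+1] ⁻¹' A)ᶜ := by
      ext x
      simp only [Set.mem_preimage, Set.mem_singleton_iff, Set.mem_compl_iff,
        Set.mem_inter_iff, Set.mem_iUnion, rtN_eq_zero_iff]
      constructor
      · intro h ⟨h1, m, hm⟩; exact h ⟨h1, m + 1, by omega, hm⟩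
      · rintro h ⟨h1, m, hm1, hm⟩
        obtain ⟨k, rfl⟩ : ∃ k, m = k + 1 := ⟨m - 1, by omega⟩
        exact h ⟨h1, k, hm⟩
    rw [this]
    exact (hA.inter (MeasurableSet.iUnion fun m => hτm.iterate (m + 1) hA)).compl
  | n + 1 =>
    have : rtN τ A ⁻¹' {n + 1} =
        (A ∩ τ^[n+1] ⁻¹' A) ∩ ⋂ j ∈ Finset.range (n + 1), {x | ¬(1 ≤ j ∧ τ^[j] x ∈ A)} := by
      ext x
      simp only [Set.mem_preimage, Set.mem_singleton_iff, rtN_eq_succ_iff,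
        Set.mem_inter_iff, Set.mem_iInter, Finset.mem_range, Set.mem_setOf_eq]
      tauto
    rw [this]
    refine (hA.inter (hτm.iterate (n + 1) hA)).inter
      (MeasurableSet.biInter (Set.to_countable _) fun j _ => ?_)
    by_cases hj : 1 ≤ j
    · have : {x | ¬(1 ≤ j ∧ τ^[j] x ∈ A)} = τ^[j] ⁻¹' Aᶜ := by
        ext x; simp [hj]
      rw [this]; exact hτm.iterate j hA.compl
    · have : {x | ¬(1 ≤ j ∧ τ^[j] x ∈ A)} = Set.univ := by
        ext x; simp [hj]
      rw [this]; exact MeasurableSet.univ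

/-- The set of points whose first `n` iterates (starting at `x` itself) miss `A`. -/
def Emis (τ : Ω → Ω) (A : Set Ω) (n : ℕ) : Set Ω := ⋂ j ∈ Finset.range n, τ^[j] ⁻¹' Aᶜ

lemma Emis_measurable {τ : Ω → Ω} {A : Set Ω} (hτm : Measurable τ) (hA : MeasurableSet A)
    (n : ℕ) : MeasurableSet (Emis τ A n) :=
  MeasurableSet.biInter (Set.to_countable _) fun j _ => hτm.iterate j hA.compl

lemma Emis_succ (τ : Ω → Ω) (A : Set Ω) (n : ℕ) :
    Emis τ A (n + 1) = Aᶜ ∩ τ ⁻¹' Emis τ A n := by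
  ext x
  simp only [Emis, Set.mem_iInter, Finset.mem_range, Set.mem_inter_iff, Set.mem_preimage,
    Set.mem_compl_iff]
  constructor
  · intro h
    refine ⟨by simpa using h 0 (by omega), fun j hj => ?_⟩
    have := h (j + 1) (by omega)
    rwa [Function.iterate_succ_apply] at this
  · rintro ⟨h0, h⟩ j hj
    match j with
    | 0 => simpa using h0
    | j + 1 => rw [Function.iterate_succ_apply]; exact h j (by omega)

lemma mem_B_iff (τ : Ω → Ω) (A : Set Ω) (n : ℕ) (x : Ω) :
    x ∈ A ∩ τ ⁻¹' Emis τ A n ↔ x ∈ A ∧ ∀ j, 1 ≤ j → j ≤ n → τ^[j] x ∉ A := by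
  simp only [Set.mem_inter_iff, Set.mem_preimage, Emis, Set.mem_iInter, Finset.mem_range,
    Set.mem_compl_iff]
  constructor
  · rintro ⟨h1, h2⟩
    refine ⟨h1, fun j hj1 hj2 => ?_⟩
    obtain ⟨k, rfl⟩ : ∃ k, j = k + 1 := ⟨j - 1, by omega⟩
    have := h2 k (by omega)
    rwa [← Function.iterate_succ_apply] at this
  · rintro ⟨h1, h2⟩
    refine ⟨h1, fun j hj => ?_⟩
    have := h2 (j + 1) (by omega) (by omega)
    rwa [Function.iterate_succ_apply] at this

end KacAux

/-- **Kac formula (unconditional form).** For an invertible measure-preserving `τ` on a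
probability space and `A` measurable, the first return time `n_A` is integrable and
`∫ n_A dμ = μ(⋃_{k ≥ 0} τ^{-k} A)`. -/
theorem kac_integral_firstReturn
    {Ω : Type*} [MeasurableSpace Ω] (μ : Measure Ω) [IsProbabilityMeasure μ]
    (τ σ : Ω → Ω) (hτm : Measurable τ) (hσm : Measurable σ)
    (hστ : Function.LeftInverse σ τ) (hτσ : Function.RightInverse σ τ)
    (hpres : ∀ B : Set Ω, MeasurableSet B → μ (τ ⁻¹' B) = μ B)
    (A : Set Ω) (hA : MeasurableSet A) :
    Integrable (firstReturn τ A) μ ∧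
      ∫ x, firstReturn τ A x ∂μ = (μ (⋃ k : ℕ, τ^[k] ⁻¹' A)).toReal := by
  have hUm : MeasurableSet (⋃ k : ℕ, τ^[k] ⁻¹' A) :=
    MeasurableSet.iUnion fun k => hτm.iterate k hA
  -- measure preservation and Poincaré recurrence
  have hmp : MeasurePreserving τ μ μ :=
    ⟨hτm, Measure.ext fun B hB => by rw [Measure.map_apply hτm hB, hpres B hB]⟩
  have hcons : Conservative τ μ := hmp.conservative
  have hR : μ {x ∈ A | ∀ m ≥ 1, τ^[m] x ∉ A} = 0 :=
    hcons.measure_mem_forall_ge_image_notMem_eq_zero hA.nullMeasurableSet 1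
  -- measurability
  have hrt : Measurable (rtN τ A) := rtN_measurable hτm hA
  have hSm : ∀ n : ℕ, MeasurableSet {y | n ≤ rtN τ A y} := fun n => hrt measurableSet_Ici
  have hEm : ∀ n, MeasurableSet (Emis τ A n) := Emis_measurable hτm hA
  -- pointwise layer-cake identity
  have hpt : ∀ x, ENNReal.ofReal (firstReturn τ A x) =
      ∑' n : ℕ, Set.indicator {y | n + 1 ≤ rtN τ A y} (1 : Ω → ENNReal) x := by
    intro x
    rw [firstReturn_eq_rtN, ENNReal.ofReal_natCast]
    have h1 : ∀ n : ℕ, Set.indicator {y | n + 1 ≤ rtN τ A y} (1 : Ω → ENNReal) x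
        = if n < rtN τ A x then 1 else 0 := by
      intro n
      simp only [Set.indicator_apply, Set.mem_setOf_eq, Pi.one_apply]
      by_cases h : n + 1 ≤ rtN τ A x
      · rw [if_pos h, if_pos (by omega)]
      · rw [if_neg h, if_neg (by omega)]
    rw [tsum_congr h1, tsum_eq_sum (s := Finset.range (rtN τ A x))
      (fun b hb => if_neg fun h => hb (Finset.mem_range.2 h))]
    rw [Finset.sum_congr rfl fun b hb => if_pos (Finset.mem_range.1 hb)]
    simp
  -- lintegral as a sum of measures
  have hlin : ∫⁻ x, ENNReal.ofReal (firstReturn τ A x) ∂μ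
      = ∑' n : ℕ, μ {y | n + 1 ≤ rtN τ A y} := by
    rw [lintegral_congr hpt,
      lintegral_tsum fun n => (measurable_one.indicator (hSm (n + 1))).aemeasurable]
    exact tsum_congr fun n => lintegral_indicator_one (hSm (n + 1))
  -- each layer has the same measure as `B n = A ∩ τ⁻¹(Emis n)`
  have hSB : ∀ n : ℕ, μ {y | n + 1 ≤ rtN τ A y} = μ (A ∩ τ ⁻¹' Emis τ A n) := by
    intro n
    have hsub : {y | n + 1 ≤ rtN τ A y} ⊆ A ∩ τ ⁻¹' Emis τ A n := by
      intro x hx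
      rw [Set.mem_setOf_eq, succ_le_rtN_iff] at hx
      exact (mem_B_iff τ A n x).2 ⟨hx.1.1, hx.2⟩
    have hsub2 : A ∩ τ ⁻¹' Emis τ A n ⊆
        {y | n + 1 ≤ rtN τ A y} ∪ {x ∈ A | ∀ m ≥ 1, τ^[m] x ∉ A} := by
      intro x hx
      rw [mem_B_iff] at hx
      by_cases hex : ∃ m : ℕ, 1 ≤ m ∧ τ^[m] x ∈ A
      · exact Or.inl ((succ_le_rtN_iff τ A x n).2 ⟨⟨hx.1, hex⟩, hx.2⟩)
      · push_neg at hex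
        exact Or.inr ⟨hx.1, fun m hm => hex m hm⟩
    refine le_antisymm (measure_mono hsub) ?_
    calc μ (A ∩ τ ⁻¹' Emis τ A n)
        ≤ μ ({y | n + 1 ≤ rtN τ A y} ∪ {x ∈ A | ∀ m ≥ 1, τ^[m] x ∉ A}) := measure_mono hsub2
      _ ≤ μ {y | n + 1 ≤ rtN τ A y} + μ {x ∈ A | ∀ m ≥ 1, τ^[m] x ∉ A} := measure_union_le _ _
      _ = μ {y | n + 1 ≤ rtN τ A y} := by rw [hR, add_zero]
  -- telescoping identity
  have hkey : ∀ n, μ (Emis τ A n) = μ (A ∩ τ ⁻¹' Emis τ A n) + μ (Emis τ A (n + 1)) := by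
    intro n
    have hsplit : τ ⁻¹' Emis τ A n
        = (A ∩ τ ⁻¹' Emis τ A n) ∪ (Aᶜ ∩ τ ⁻¹' Emis τ A n) := by
      rw [← Set.union_inter_distrib_right, Set.union_compl_self, Set.univ_inter]
    have h1 : μ (τ ⁻¹' Emis τ A n)
        = μ (A ∩ τ ⁻¹' Emis τ A n) + μ (Aᶜ ∩ τ ⁻¹' Emis τ A n) := by
      conv_lhs => rw [hsplit]
      exact measure_union (Disjoint.mono Set.inter_subset_left Set.inter_subset_left
        disjoint_compl_right) (hA.compl.inter (hτm (hEm n)))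
    rw [Emis_succ, ← hpres _ (hEm n)]
    exact h1
  have htel : ∀ N : ℕ,
      (∑ n ∈ Finset.range N, μ (A ∩ τ ⁻¹' Emis τ A n)) + μ (Emis τ A N) = 1 := by
    intro N
    induction N with
    | zero =>
      have : Emis τ A 0 = Set.univ := by simp [Emis]
      simp [this]
    | succ N ih =>
      rw [Finset.sum_range_succ, add_assoc, ← hkey N, ih]
  -- limit of the tails
  have hmono : Antitone (Emis τ A) := by
    intro m n h x hx
    simp only [Emis, Set.mem_iInter, Finset.mem_range] at hx ⊢
    exact fun j hj => hx j (lt_of_lt_of_le hj h)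
  have hInter : ⋂ n, Emis τ A n = (⋃ k : ℕ, τ^[k] ⁻¹' A)ᶜ := by
    ext x
    simp only [Set.mem_iInter, Emis, Finset.mem_range, Set.mem_compl_iff, Set.mem_iUnion,
      Set.mem_preimage, not_exists]
    constructor
    · intro h k; exact h (k + 1) k (by omega)
    · intro h n j _; exact h j
  have hlim : Filter.Tendsto (fun N => μ (Emis τ A N)) Filter.atTop
      (nhds (μ ((⋃ k : ℕ, τ^[k] ⁻¹' A)ᶜ))) := by
    rw [← hInter]
    exact tendsto_measure_iInter_atTop (fun n => (hEm n).nullMeasurableSet) hmono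
      ⟨0, measure_ne_top μ _⟩
  -- sum of the series
  have hsum : ∑' n : ℕ, μ (A ∩ τ ⁻¹' Emis τ A n) = μ (⋃ k : ℕ, τ^[k] ⁻¹' A) := by
    have h1 : Filter.Tendsto (fun N => ∑ n ∈ Finset.range N, μ (A ∩ τ ⁻¹' Emis τ A n))
        Filter.atTop (nhds (∑' n : ℕ, μ (A ∩ τ ⁻¹' Emis τ A n))) :=
      ENNReal.tendsto_nat_tsum _
    have h2 : Filter.Tendsto (fun N => ∑ n ∈ Finset.range N, μ (A ∩ τ ⁻¹' Emis τ A n))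
        Filter.atTop (nhds (1 - μ ((⋃ k : ℕ, τ^[k] ⁻¹' A)ᶜ))) := by
      have heq : ∀ N, (∑ n ∈ Finset.range N, μ (A ∩ τ ⁻¹' Emis τ A n))
          = 1 - μ (Emis τ A N) := fun N =>
        ENNReal.eq_sub_of_add_eq (measure_ne_top μ _) (htel N)
      simp only [heq]
      exact ENNReal.Tendsto.sub tendsto_const_nhds hlim (Or.inl ENNReal.one_ne_top)
    rw [tendsto_nhds_unique h1 h2, measure_compl hUm (measure_ne_top μ _), measure_univ,
      ENNReal.sub_sub_cancel ENNReal.one_ne_top prob_le_one]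
  have hlin2 : ∫⁻ x, ENNReal.ofReal (firstReturn τ A x) ∂μ = μ (⋃ k : ℕ, τ^[k] ⁻¹' A) := by
    rw [hlin, tsum_congr hSB, hsum]
  -- wrap up
  have hf_meas : Measurable (firstReturn τ A) := by
    have : firstReturn τ A = fun x => ((rtN τ A x : ℝ)) := funext (firstReturn_eq_rtN τ A)
    rw [this]
    exact measurable_from_nat.comp hrt
  have hf_nonneg : ∀ x, 0 ≤ firstReturn τ A x := fun x => by
    rw [firstReturn_eq_rtN]; positivity
  have hint : Integrable (firstReturn τ A) μ := by
    refine ⟨hf_meas.aestronglyMeasurable, ?_⟩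
    rw [hasFiniteIntegral_iff_ofReal (Filter.Eventually.of_forall hf_nonneg), hlin2]
    exact measure_lt_top μ _
  refine ⟨hint, ?_⟩
  rw [integral_eq_lintegral_of_nonneg_ae (Filter.Eventually.of_forall hf_nonneg)
    hf_meas.aestronglyMeasurable, hlin2]
end

section
/- (Conditional Kac formula over the invariant σ-algebra.) Let (Ω, 𝒜, μ) be a probability space, let τ : Ω → Ω be an invertible measure-preserving transformation, and let A ∈ 𝒜. Then μ-almost everywhere, μ[n_A | 𝓘_τ] equals the indicator function of the set ⋃_{k≥0} τ^{-k}(A). -/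
open MeasureTheory Classical
open scoped ENNReal

section KacAux

variable {Ω : Type*} [MeasurableSpace Ω]

/-- The set of points of `A` whose first return time to `A` is exactly `n`. -/
def kacRetSet (τ : Ω → Ω) (A : Set Ω) (n : ℕ) : Set Ω :=
  A ∩ τ^[n] ⁻¹' A ∩ ⋂ (j : ℕ) (_ : 0 < j) (_ : j < n), (τ^[j] ⁻¹' A)ᶜ

lemma mem_kacRetSet {τ : Ω → Ω} {A : Set Ω} {n : ℕ} {x : Ω} :
    x ∈ kacRetSet τ A n ↔ x ∈ A ∧ τ^[n] x ∈ A ∧ ∀ j, 0 < j → j < n → τ^[j] x ∉ A := by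
  simp [kacRetSet, Set.mem_iInter, and_assoc]

lemma measurableSet_kacRetSet {τ : Ω → Ω} (hτm : Measurable τ) {A : Set Ω}
    (hA : MeasurableSet A) (n : ℕ) : MeasurableSet (kacRetSet τ A n) :=
  ((hA.inter ((hτm.iterate n) hA)).inter
    (MeasurableSet.iInter fun j => MeasurableSet.iInter fun _ =>
      MeasurableSet.iInter fun _ => ((hτm.iterate j) hA).compl))

lemma ofReal_firstReturn_eq_tsum (τ : Ω → Ω) (A : Set Ω) (x : Ω) :
    ENNReal.ofReal (firstReturn τ A x)
      = ∑' n : ℕ, (kacRetSet τ A n).indicator (fun _ => (n : ℝ≥0∞)) x := by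
  by_cases h : x ∈ A ∧ ∃ n : ℕ, 1 ≤ n ∧ τ^[n] x ∈ A
  · simp only [firstReturn, dif_pos h]
    set N := Nat.find h.2 with hNdef
    have hN1 : 1 ≤ N := (Nat.find_spec h.2).1
    have hNA : τ^[N] x ∈ A := (Nat.find_spec h.2).2
    have hmem : x ∈ kacRetSet τ A N :=
      mem_kacRetSet.2 ⟨h.1, hNA, fun j hj0 hjN hja => Nat.find_min h.2 hjN ⟨hj0, hja⟩⟩
    rw [tsum_eq_single N ?_]
    · rw [Set.indicator_of_mem hmem, ENNReal.ofReal_natCast]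
    · intro n hn
      rcases Nat.eq_zero_or_pos n with h0 | hpos
      · simp [h0]
      · rw [Set.indicator_of_notMem]
        intro hx
        obtain ⟨-, hnA, hmin⟩ := mem_kacRetSet.1 hx
        rcases lt_trichotomy n N with hlt | heq | hgt
        · exact Nat.find_min h.2 hlt ⟨hpos, hnA⟩
        · exact hn heq
        · exact hmin N hN1 hgt hNA
  · simp only [firstReturn, dif_neg h, ENNReal.ofReal_zero]
    symm
    have hz : ∀ n : ℕ, (kacRetSet τ A n).indicator (fun _ => (n : ℝ≥0∞)) x = 0 := by
      intro n
      rcases Nat.eq_zero_or_pos n with h0 | hpos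
      · simp [h0]
      · rw [Set.indicator_of_notMem]
        intro hx
        obtain ⟨hxA, hnA, -⟩ := mem_kacRetSet.1 hx
        exact h ⟨hxA, n, hpos, hnA⟩
    rw [tsum_congr hz, tsum_zero]

lemma measurable_firstReturn {τ : Ω → Ω} (hτm : Measurable τ) {A : Set Ω}
    (hA : MeasurableSet A) : Measurable (firstReturn τ A) := by
  have hnn : ∀ x, 0 ≤ firstReturn τ A x := by
    intro x
    unfold firstReturn
    split
    · positivity
    · exact le_refl 0
  have : firstReturn τ A = fun x =>
      (∑' n : ℕ, (kacRetSet τ A n).indicator (fun _ => (n : ℝ≥0∞)) x).toReal := by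
    funext x
    rw [← ofReal_firstReturn_eq_tsum, ENNReal.toReal_ofReal (hnn x)]
  rw [this]
  exact (Measurable.ennreal_tsum fun n =>
    measurable_const.indicator (measurableSet_kacRetSet hτm hA n)).ennreal_toReal

lemma firstReturn_nonneg (τ : Ω → Ω) (A : Set Ω) (x : Ω) : 0 ≤ firstReturn τ A x := by
  unfold firstReturn
  split
  · positivity
  · exact le_refl 0

/-- Shift: `τ^[j] (σ^[k] x) = σ^[k-j] x` for `j ≤ k`, given `τ ∘ σ = id`. -/
lemma kac_shift {τ σ : Ω → Ω} (hτσ : Function.LeftInverse τ σ) {j k : ℕ} (h : j ≤ k)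
    (x : Ω) : τ^[j] (σ^[k] x) = σ^[k - j] x := by
  conv_lhs => rw [show k = j + (k - j) from (Nat.add_sub_cancel' h).symm,
    Function.iterate_add_apply]
  exact (hτσ.iterate j) _

/-- Shift: `τ^[j] (σ^[k] x) = τ^[j-k] x` for `k ≤ j`, given `τ ∘ σ = id`. -/
lemma kac_shift2 {τ σ : Ω → Ω} (hτσ : Function.LeftInverse τ σ) {j k : ℕ} (h : k ≤ j)
    (x : Ω) : τ^[j] (σ^[k] x) = τ^[j - k] x := by
  conv_lhs => rw [show j = (j - k) + k from (Nat.sub_add_cancel h).symm,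
    Function.iterate_add_apply]
  rw [(hτσ.iterate k) x]

/-- `ν (W ∪ V) = ν W` where `W = ⋃ τ^{-k} A`, `V = ⋃ σ^{-k} A`. -/
lemma kac_measure_union (ν : Measure Ω) (τ σ : Ω → Ω)
    (hστ : Function.LeftInverse σ τ) (hτσ : Function.RightInverse σ τ)
    (hσ : MeasurePreserving σ ν ν) {A : Set Ω} (hA : MeasurableSet A)
    (hτm : Measurable τ) :
    ν ((⋃ k : ℕ, τ^[k] ⁻¹' A) ∪ ⋃ k : ℕ, σ^[k] ⁻¹' A) = ν (⋃ k : ℕ, τ^[k] ⁻¹' A) := by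
  set W := ⋃ k : ℕ, τ^[k] ⁻¹' A with hW
  set V := ⋃ k : ℕ, σ^[k] ⁻¹' A with hV
  have hWmeas : MeasurableSet W :=
    MeasurableSet.iUnion fun k => (hτm.iterate k) hA
  have hWσ : W ⊆ σ ⁻¹' W := by
    intro x hx
    obtain ⟨k, hk⟩ := Set.mem_iUnion.1 hx
    refine Set.mem_preimage.2 (Set.mem_iUnion.2 ⟨k + 1, ?_⟩)
    simp only [Set.mem_preimage] at hk ⊢
    rwa [Function.iterate_succ_apply, hτσ x]
  have hmono : Monotone fun j : ℕ => σ^[j] ⁻¹' W := by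
    refine monotone_nat_of_le_succ fun j => ?_
    intro x hx
    simp only [Set.mem_preimage] at hx ⊢
    rw [Function.iterate_succ_apply']
    exact hWσ hx
  have hUnion : (⋃ j : ℕ, σ^[j] ⁻¹' W) = W ∪ V := by
    ext x
    constructor
    · intro hx
      obtain ⟨j, hj⟩ := Set.mem_iUnion.1 hx
      simp only [Set.mem_preimage] at hj
      obtain ⟨k, hk⟩ := Set.mem_iUnion.1 hj
      simp only [Set.mem_preimage] at hk
      rcases le_total j k with hjk | hkj
      · left
        refine Set.mem_iUnion.2 ⟨k - j, ?_⟩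
        simp only [Set.mem_preimage]
        rwa [← kac_shift2 hτσ hjk]
      · right
        refine Set.mem_iUnion.2 ⟨j - k, ?_⟩
        simp only [Set.mem_preimage]
        rwa [← kac_shift hτσ hkj]
    · intro hx
      rcases hx with hx | hx
      · exact Set.mem_iUnion.2 ⟨0, hx⟩
      · obtain ⟨k, hk⟩ := Set.mem_iUnion.1 hx
        refine Set.mem_iUnion.2 ⟨k, ?_⟩
        simp only [Set.mem_preimage] at hk ⊢
        exact Set.mem_iUnion.2 ⟨0, hk⟩
  have hdir : Directed (· ⊆ ·) fun j : ℕ => σ^[j] ⁻¹' W := hmono.directed_le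
  calc ν (W ∪ V) = ν (⋃ j : ℕ, σ^[j] ⁻¹' W) := by rw [hUnion]
    _ = ⨆ j : ℕ, ν (σ^[j] ⁻¹' W) := hdir.measure_iUnion
    _ = ⨆ _ : ℕ, ν W := by
        congr 1; funext j; exact (hσ.iterate j).measure_preimage hWmeas.nullMeasurableSet
    _ = ν W := ciSup_const

/-- **Kac's formula** (lintegral form) for a finite invariant measure. -/
lemma kac_lintegral (ν : Measure Ω) [IsFiniteMeasure ν] (τ σ : Ω → Ω)
    (hτm : Measurable τ) (hσm : Measurable σ)
    (hστ : Function.LeftInverse σ τ) (hτσ : Function.RightInverse σ τ)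
    (hτ : MeasurePreserving τ ν ν) {A : Set Ω} (hA : MeasurableSet A) :
    ∫⁻ x, ENNReal.ofReal (firstReturn τ A x) ∂ν = ν (⋃ k : ℕ, τ^[k] ⁻¹' A) := by
  have hσ : MeasurePreserving σ ν ν := by
    refine ⟨hσm, Measure.ext fun s hs => ?_⟩
    rw [Measure.map_apply hσm hs]
    have hps : τ ⁻¹' (σ ⁻¹' s) = s := by
      rw [← Set.preimage_comp, hστ.comp_eq_id, Set.preimage_id]
    calc ν (σ ⁻¹' s) = ν (τ ⁻¹' (σ ⁻¹' s)) :=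
          (hτ.measure_preimage ((hσm hs).nullMeasurableSet)).symm
      _ = ν s := by rw [hps]
  set W := ⋃ k : ℕ, τ^[k] ⁻¹' A with hWdef
  set V := ⋃ k : ℕ, σ^[k] ⁻¹' A with hVdef
  have hWmeas : MeasurableSet W := MeasurableSet.iUnion fun k => (hτm.iterate k) hA
  have hVmeas : MeasurableSet V := MeasurableSet.iUnion fun k => (hσm.iterate k) hA
  have hR := measurableSet_kacRetSet hτm hA
  -- the Kac tower
  set D : ℕ × ℕ → Set Ω :=
    fun p => if p.2 < p.1 then σ^[p.2] ⁻¹' (kacRetSet τ A p.1) else ∅ with hDdef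
  have hDmeas : ∀ p, MeasurableSet (D p) := by
    rintro ⟨n, k⟩
    simp only [hDdef]
    split
    · exact (hσm.iterate k) (hR n)
    · exact MeasurableSet.empty
  -- key injectivity for disjointness
  have hkey : ∀ (n k m l : ℕ) (x : Ω), k < n → l < m → k ≤ l →
      σ^[k] x ∈ kacRetSet τ A n → σ^[l] x ∈ kacRetSet τ A m → (n, k) = (m, l) := by
    intro n k m l x hkn hlm hkl hy hz
    obtain ⟨hyA, hynA, hymin⟩ := mem_kacRetSet.1 hy
    obtain ⟨hzA, hzmA, hzmin⟩ := mem_kacRetSet.1 hz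
    have hyz : σ^[k] x = τ^[l - k] (σ^[l] x) := by
      rw [kac_shift hτσ (Nat.sub_le l k), Nat.sub_sub_self hkl]
    rcases eq_or_lt_of_le hkl with rfl | hlt
    · -- same base point, so same first-return level
      rcases lt_trichotomy n m with h1 | h1 | h1
      · exact absurd hynA (hzmin n (lt_of_le_of_lt (Nat.zero_le k) hkn) h1)
      · rw [h1]
      · exact absurd hzmA (hymin m (lt_of_le_of_lt (Nat.zero_le k) hlm) h1)
    · exfalso
      have hd1 : 0 < l - k := Nat.sub_pos_of_lt hlt
      have hd2 : l - k < m := lt_of_le_of_lt (Nat.sub_le l k) hlm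
      exact hzmin (l - k) hd1 hd2 (by rw [← hyz]; exact hyA)
  have hdisj : Pairwise (Function.onFun Disjoint D) := by
    rintro ⟨n, k⟩ ⟨m, l⟩ hne
    simp only [Function.onFun, hDdef]
    split
    · split
      · rename_i hkn hlm
        refine Set.disjoint_left.2 fun x hx1 hx2 => hne ?_
        simp only [Set.mem_preimage] at hx1 hx2
        rcases le_total k l with h | h
        · exact hkey n k m l x hkn hlm h hx1 hx2
        · exact (hkey m l n k x hlm hkn h hx2 hx1).symm
      · exact Set.disjoint_empty _
    · exact Set.empty_disjoint _
  set T := ⋃ p : ℕ × ℕ, D p with hTdef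
  have hTmeas : MeasurableSet T := MeasurableSet.iUnion hDmeas
  -- measure of each tower level
  have hDm : ∀ n k : ℕ, k < n → ν (D (n, k)) = ν (kacRetSet τ A n) := by
    intro n k hkn
    simp only [hDdef, if_pos hkn]
    exact (hσ.iterate k).measure_preimage (hR n).nullMeasurableSet
  -- lintegral = sum of n * ν (R n)
  have hlin : ∫⁻ x, ENNReal.ofReal (firstReturn τ A x) ∂ν
      = ∑' n : ℕ, (n : ℝ≥0∞) * ν (kacRetSet τ A n) := by
    calc ∫⁻ x, ENNReal.ofReal (firstReturn τ A x) ∂ν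
        = ∫⁻ x, ∑' n : ℕ, (kacRetSet τ A n).indicator (fun _ => (n : ℝ≥0∞)) x ∂ν := by
          congr 1; funext x; exact ofReal_firstReturn_eq_tsum τ A x
      _ = ∑' n : ℕ, ∫⁻ x, (kacRetSet τ A n).indicator (fun _ => (n : ℝ≥0∞)) x ∂ν :=
          lintegral_tsum fun n => (measurable_const.indicator (hR n)).aemeasurable
      _ = ∑' n : ℕ, (n : ℝ≥0∞) * ν (kacRetSet τ A n) := by
          congr 1; funext n; exact lintegral_indicator_const (hR n) _
  -- ν T = same sum
  have hνT : ν T = ∑' n : ℕ, (n : ℝ≥0∞) * ν (kacRetSet τ A n) := by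
    rw [hTdef, measure_iUnion hdisj hDmeas, ENNReal.tsum_prod']
    congr 1; funext n
    have : ∀ k : ℕ, ν (D (n, k)) = if k < n then ν (kacRetSet τ A n) else 0 := by
      intro k
      split
      · exact hDm n k ‹_›
      · simp only [hDdef, if_neg ‹¬ k < n›, measure_empty]
    rw [tsum_congr this, tsum_eq_sum (s := Finset.range n)
      (fun k hk => if_neg (by simpa using hk))]
    rw [Finset.sum_congr rfl (fun k hk => if_pos (Finset.mem_range.1 hk)),
      Finset.sum_const, Finset.card_range, nsmul_eq_mul]
  -- T ⊆ W
  have hTW : T ⊆ W := by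
    rintro x hx
    obtain ⟨⟨n, k⟩, hp⟩ := Set.mem_iUnion.1 hx
    simp only [hDdef] at hp
    by_cases hkn : k < n
    · rw [if_pos hkn] at hp
      simp only [Set.mem_preimage] at hp
      obtain ⟨-, hnA, -⟩ := mem_kacRetSet.1 hp
      refine Set.mem_iUnion.2 ⟨n - k, ?_⟩
      simp only [Set.mem_preimage]
      rwa [← kac_shift2 hτσ hkn.le]
    · rw [if_neg hkn] at hp; exact absurd hp (Set.notMem_empty x)
  -- the never-returning part of A is null (Poincaré)
  set Ainf := A ∩ ⋂ (j : ℕ) (_ : 1 ≤ j), (τ^[j] ⁻¹' A)ᶜ with hAinfdef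
  have hAinfmeas : MeasurableSet Ainf :=
    hA.inter (MeasurableSet.iInter fun j => MeasurableSet.iInter fun _ =>
      ((hτm.iterate j) hA).compl)
  have hAinf0 : ν Ainf = 0 := by
    have hrec := (hτ.conservative).ae_mem_imp_frequently_image_mem hA.nullMeasurableSet
    have hnull : ν {x | ¬ (x ∈ A → ∃ᶠ n in Filter.atTop, τ^[n] x ∈ A)} = 0 :=
      ae_iff.mp hrec
    refine measure_mono_null ?_ hnull
    rintro x ⟨hxA, hxI⟩ himp
    obtain ⟨n, hn1, hnA⟩ := (Filter.frequently_atTop.1 (himp hxA)) 1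
    exact (Set.mem_iInter.1 (Set.mem_iInter.1 hxI n) hn1) hnA
  -- V ⊆ T ∪ null
  have hVT : V ⊆ T ∪ ⋃ k : ℕ, σ^[k] ⁻¹' Ainf := by
    intro x hx
    have hex : ∃ k : ℕ, σ^[k] x ∈ A := by
      obtain ⟨k, hk⟩ := Set.mem_iUnion.1 hx
      exact ⟨k, hk⟩
    set K := Nat.find hex with hKdef
    have hKA : σ^[K] x ∈ A := Nat.find_spec hex
    have hKmin : ∀ i : ℕ, 1 ≤ i → i ≤ K → τ^[i] (σ^[K] x) ∉ A := by
      intro i h1 h2 hcon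
      have : σ^[K - i] x ∈ A := by rwa [kac_shift hτσ h2 x] at hcon
      exact Nat.find_min hex (Nat.sub_lt_of_pos_le h1 h2) this
    by_cases hret : ∃ n : ℕ, 1 ≤ n ∧ τ^[n] (σ^[K] x) ∈ A
    · left
      set N := Nat.find hret with hNdef
      have hN1 : 1 ≤ N := (Nat.find_spec hret).1
      have hNA : τ^[N] (σ^[K] x) ∈ A := (Nat.find_spec hret).2
      have hKN : K < N := by
        by_contra hle
        exact hKmin N hN1 (le_of_not_gt hle) hNA
      refine Set.mem_iUnion.2 ⟨(N, K), ?_⟩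
      simp only [hDdef, if_pos hKN, Set.mem_preimage]
      exact mem_kacRetSet.2 ⟨hKA, hNA,
        fun j hj0 hjN hja => Nat.find_min hret hjN ⟨hj0, hja⟩⟩
    · right
      refine Set.mem_iUnion.2 ⟨K, ?_⟩
      simp only [Set.mem_preimage, hAinfdef]
      push_neg at hret
      exact ⟨hKA, Set.mem_iInter.2 fun j => Set.mem_iInter.2 fun hj => hret j hj⟩
  have hnullU : ν (⋃ k : ℕ, σ^[k] ⁻¹' Ainf) = 0 :=
    measure_iUnion_null fun k => by
      rw [(hσ.iterate k).measure_preimage hAinfmeas.nullMeasurableSet]; exact hAinf0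
  have hVleT : ν V ≤ ν T := by
    calc ν V ≤ ν (T ∪ ⋃ k : ℕ, σ^[k] ⁻¹' Ainf) := measure_mono hVT
      _ ≤ ν T + ν (⋃ k : ℕ, σ^[k] ⁻¹' Ainf) := measure_union_le _ _
      _ = ν T := by rw [hnullU, add_zero]
  -- ν W = ν V
  have hWV : ν W = ν V := by
    have h1 : ν (W ∪ V) = ν W := kac_measure_union ν τ σ hστ hτσ hσ hA hτm
    have h2 : ν (V ∪ W) = ν V := kac_measure_union ν σ τ hτσ hστ hτ hA hσm
    rw [← h1, Set.union_comm, h2]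
  have hTWeq : ν T = ν W :=
    le_antisymm (measure_mono hTW) (by rw [hWV]; exact hVleT)
  rw [hlin, ← hνT, hTWeq]

end KacAux

/-- **Conditional Kac formula over the invariant σ-algebra.** For an invertible
measure-preserving `τ` on a probability space and `A` measurable, a.e.
`μ[n_A | 𝓘_τ]` equals the indicator of `⋃_{k ≥ 0} τ^{-k} A`. -/
theorem kac_condexp_invariants
    {Ω : Type*} [MeasurableSpace Ω] (μ : Measure Ω) [IsProbabilityMeasure μ]
    (τ σ : Ω → Ω) (hτm : Measurable τ) (hσm : Measurable σ)
    (hστ : Function.LeftInverse σ τ) (hτσ : Function.RightInverse σ τ)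
    (hpres : ∀ B : Set Ω, MeasurableSet B → μ (τ ⁻¹' B) = μ B)
    (A : Set Ω) (hA : MeasurableSet A) :
    μ[firstReturn τ A | MeasurableSpace.invariants τ]
      =ᵐ[μ] (⋃ k : ℕ, τ^[k] ⁻¹' A).indicator (fun _ => (1 : ℝ)) := by
  have hτ : MeasurePreserving τ μ μ :=
    ⟨hτm, Measure.ext fun s hs => by rw [Measure.map_apply hτm hs, hpres s hs]⟩
  set W := ⋃ k : ℕ, τ^[k] ⁻¹' A with hWdef
  set V := ⋃ k : ℕ, σ^[k] ⁻¹' A with hVdef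
  have hσ : MeasurePreserving σ μ μ := by
    refine ⟨hσm, Measure.ext fun s hs => ?_⟩
    rw [Measure.map_apply hσm hs]
    have hps : τ ⁻¹' (σ ⁻¹' s) = s := by
      rw [← Set.preimage_comp, hστ.comp_eq_id, Set.preimage_id]
    calc μ (σ ⁻¹' s) = μ (τ ⁻¹' (σ ⁻¹' s)) := (hpres _ (hσm hs)).symm
      _ = μ s := by rw [hps]
  have hWmeas : MeasurableSet W := MeasurableSet.iUnion fun k => (hτm.iterate k) hA
  have hVmeas : MeasurableSet V := MeasurableSet.iUnion fun k => (hσm.iterate k) hA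
  have hm : MeasurableSpace.invariants τ ≤ ‹MeasurableSpace Ω› :=
    MeasurableSpace.invariants_le τ
  -- U = W ∪ V is exactly invariant
  have hUinv : τ ⁻¹' (W ∪ V) = W ∪ V := by
    ext x
    simp only [Set.mem_preimage, Set.mem_union, hWdef, hVdef, Set.mem_iUnion]
    constructor
    · rintro (⟨k, hk⟩ | ⟨k, hk⟩)
      · left
        exact ⟨k + 1, by rwa [Function.iterate_succ_apply]⟩
      · rcases k with _ | m
        · left; exact ⟨1, by simpa using hk⟩
        · right
          refine ⟨m, ?_⟩
          rwa [Function.iterate_succ_apply, hστ x] at hk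
    · rintro (⟨k, hk⟩ | ⟨k, hk⟩)
      · rcases k with _ | m
        · right
          refine ⟨1, ?_⟩
          simpa [Function.iterate_one, hστ x] using hk
        · left
          exact ⟨m, by rwa [← Function.iterate_succ_apply]⟩
      · right
        refine ⟨k + 1, ?_⟩
        rwa [Function.iterate_succ_apply, hστ x]
  have hUW : μ (W ∪ V) = μ W := kac_measure_union μ τ σ hστ hτσ hσ hA hτm
  -- integrability of the return time
  have hkacμ : ∫⁻ x, ENNReal.ofReal (firstReturn τ A x) ∂μ = μ W :=
    kac_lintegral μ τ σ hτm hσm hστ hτσ hτ hA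
  have hf_meas : Measurable (firstReturn τ A) := measurable_firstReturn hτm hA
  have hf_int : Integrable (firstReturn τ A) μ := by
    refine ⟨hf_meas.aestronglyMeasurable, ?_⟩
    rw [hasFiniteIntegral_iff_norm]
    have : ∀ x, ENNReal.ofReal ‖firstReturn τ A x‖
        = ENNReal.ofReal (firstReturn τ A x) := fun x => by
      rw [Real.norm_of_nonneg (firstReturn_nonneg τ A x)]
    simp_rw [this]
    rw [hkacμ]
    exact measure_lt_top μ W
  refine (ae_eq_condExp_of_forall_setIntegral_eq hm hf_int ?_ ?_ ?_).symm
  · intro s _ _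
    exact ((integrable_const (1 : ℝ)).indicator hWmeas).integrableOn
  · -- equal integrals on invariant sets
    intro s hs _
    obtain ⟨hsmeas, hsinv⟩ := hs
    -- τ preserves μ.restrict s
    have hres : MeasurePreserving τ (μ.restrict s) (μ.restrict s) := by
      refine ⟨hτm, Measure.ext fun t ht => ?_⟩
      rw [Measure.map_apply hτm ht, Measure.restrict_apply (hτm ht),
        Measure.restrict_apply ht]
      conv_lhs => rw [← hsinv]
      rw [← Set.preimage_inter, hpres _ (ht.inter hsmeas)]
    have hkacs : ∫⁻ x, ENNReal.ofReal (firstReturn τ A x) ∂(μ.restrict s) = μ (W ∩ s) := by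
      rw [kac_lintegral (μ.restrict s) τ σ hτm hσm hστ hτσ hres hA,
        Measure.restrict_apply hWmeas]
    have hlhs : ∫ x in s, W.indicator (fun _ => (1 : ℝ)) x ∂μ = (μ (W ∩ s)).toReal := by
      rw [integral_indicator_const (1 : ℝ) hWmeas, measureReal_def, Measure.restrict_apply hWmeas,
        smul_eq_mul, mul_one]
    have hrhs : ∫ x in s, firstReturn τ A x ∂μ = (μ (W ∩ s)).toReal := by
      rw [integral_eq_lintegral_of_nonneg_ae
        (Filter.Eventually.of_forall fun x => firstReturn_nonneg τ A x)
        hf_meas.aestronglyMeasurable, hkacs]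
    rw [hlhs, hrhs]
  · -- a.e. strong measurability w.r.t. invariants
    refine ⟨(W ∪ V).indicator (fun _ => (1 : ℝ)), ?_, ?_⟩
    · exact stronglyMeasurable_const.indicator
        (MeasurableSpace.measurableSet_invariants.2 ⟨hWmeas.union hVmeas, hUinv⟩)
    · refine indicator_ae_eq_of_ae_eq_set ?_
      have hsub : W ⊆ W ∪ V := Set.subset_union_left
      have hdiff : μ ((W ∪ V) \ W) = 0 := by
        rw [measure_diff hsub hWmeas.nullMeasurableSet (measure_ne_top μ W), hUW,
          tsub_self]
      rw [Filter.eventuallyEq_set]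
      have : ∀ᵐ x ∂μ, x ∉ (W ∪ V) \ W := by
        rw [ae_iff]
        simp only [not_not, Set.setOf_mem_eq]; exact hdiff
      filter_upwards [this] with x hx
      constructor
      · exact fun h => Or.inl h
      · rintro (h | h)
        · exact h
        · by_contra hnW
          exact hx ⟨Or.inr h, hnW⟩
end

section
/- Let (Ω, 𝒜, μ) be a probability space, let τ : Ω → Ω be an invertible measure-preserving transformation, and let Σ be a sub-σ-algebra of 𝒜 such that μ[χ_{τ⁻¹(B)} | Σ] = μ[χ_B | Σ] μ-a.e. for every B ∈ 𝒜. Then every B ∈ Σ is almost invariant under τ: μ(τ⁻¹(B) Δ B) = 0. -/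
open MeasureTheory

lemma aux_ind_int {Ω : Type*} (mΩ : MeasurableSpace Ω) (μ : Measure Ω) [IsFiniteMeasure μ]
    {s : Set Ω} (hs : MeasurableSet s) :
    Integrable (s.indicator (fun _ => (1 : ℝ))) μ :=
  (integrable_const (1 : ℝ)).indicator hs

lemma aux_congr {Ω : Type*} (mΩ : MeasurableSpace Ω) (μ : Measure Ω)
    {s : Set Ω} (hs : MeasurableSet s) {f g : Ω → ℝ} (h : f =ᵐ[μ] g) :
    ∫ x in s, f x ∂μ = ∫ x in s, g x ∂μ :=
  setIntegral_congr_ae hs (h.mono fun _ hx _ => hx)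

lemma aux_main {Ω : Type*} (mΩ : MeasurableSpace Ω) (μ : Measure Ω) [IsFiniteMeasure μ]
    {A B : Set Ω} (hA : MeasurableSet A) (hB : MeasurableSet B) (hAB : μ A = μ B)
    (hkey : ∫ x in B, A.indicator (fun _ => (1 : ℝ)) x ∂μ
      = ∫ x in B, B.indicator (fun _ => (1 : ℝ)) x ∂μ) :
    μ (symmDiff A B) = 0 := by
  have e1 : ∫ x in B, A.indicator (fun _ => (1 : ℝ)) x ∂μ = (μ (B ∩ A)).toReal := by
    rw [setIntegral_indicator hA, setIntegral_const, smul_eq_mul, mul_one, measureReal_def]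
  have e2 : ∫ x in B, B.indicator (fun _ => (1 : ℝ)) x ∂μ = (μ B).toReal := by
    rw [setIntegral_indicator hB, Set.inter_self, setIntegral_const, smul_eq_mul, mul_one, measureReal_def]
  rw [e1, e2] at hkey
  have hinter : μ (B ∩ A) = μ B :=
    (ENNReal.toReal_eq_toReal_iff' (measure_lt_top μ _).ne (measure_lt_top μ _).ne).mp hkey
  have h1 : μ (B \ A) = 0 := by
    rw [← Set.diff_self_inter, measure_diff Set.inter_subset_left
      (hB.inter hA).nullMeasurableSet (measure_lt_top μ _).ne, hinter, tsub_self]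
  have h2 : μ (A \ B) = 0 := by
    have hinter' : μ (A ∩ B) = μ A := by rw [Set.inter_comm, hinter, hAB]
    rw [← Set.diff_self_inter, measure_diff Set.inter_subset_left
      (hA.inter hB).nullMeasurableSet (measure_lt_top μ _).ne, hinter', tsub_self]
  rw [Set.symmDiff_def]
  exact measure_union_null h2 h1

/-- If `τ` is an invertible measure-preserving transformation on a probability space and `Σ`
is a sub-σ-algebra such that `μ[χ_{τ⁻¹ B} | Σ] = μ[χ_B | Σ]` a.e. for every measurable `B`,
then every `Σ`-measurable set `B` is almost invariant: `μ(τ⁻¹ B ∆ B) = 0`. -/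
theorem sigma_algebra_almost_invariant
    {Ω : Type*} [m0 : MeasurableSpace Ω] (μ : Measure Ω) [IsProbabilityMeasure μ]
    (τ σ : Ω → Ω) (hτm : Measurable τ) (hσm : Measurable σ)
    (hστ : Function.LeftInverse σ τ) (hτσ : Function.RightInverse σ τ)
    (hpres : ∀ B : Set Ω, MeasurableSet B → μ (τ ⁻¹' B) = μ B)
    (m : MeasurableSpace Ω) (hm : m ≤ m0)
    (hcond : ∀ B : Set Ω, MeasurableSet B →
      μ[(τ ⁻¹' B).indicator (fun _ => (1 : ℝ)) | m]
        =ᵐ[μ] μ[B.indicator (fun _ => (1 : ℝ)) | m]) :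
    ∀ B : Set Ω, MeasurableSet[m] B → μ (symmDiff (τ ⁻¹' B) B) = 0 := by
  intro B hBm
  have hB : MeasurableSet[m0] B := hm B hBm
  have hτB : MeasurableSet[m0] (τ ⁻¹' B) := hτm hB
  have hint : Integrable ((τ ⁻¹' B).indicator (fun _ => (1 : ℝ))) μ := aux_ind_int m0 μ hτB
  have hintB : Integrable (B.indicator (fun _ => (1 : ℝ))) μ := aux_ind_int m0 μ hB
  have hself : μ[B.indicator (fun _ => (1 : ℝ)) | m] =ᵐ[μ] B.indicator (fun _ => (1 : ℝ)) := by
    rw [condExp_of_stronglyMeasurable hm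
      ((stronglyMeasurable_const (β := ℝ)).indicator hBm) hintB]
  have key : ∫ x in B, (τ ⁻¹' B).indicator (fun _ => (1 : ℝ)) x ∂μ
      = ∫ x in B, B.indicator (fun _ => (1 : ℝ)) x ∂μ := by
    rw [← setIntegral_condExp hm hint hBm]
    exact aux_congr m0 μ hB ((hcond B hBm).trans hself)
  exact aux_main m0 μ hτB hB (hpres B hB) key
end
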